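/- arXiv:1801.09457 — 19 statements merged into one kernel-verified Lean document; each statement's English description precedes it below -/
import Mathlib

section
/- Let (x_n)_{n≥-3} be a well-defined solution of the difference equation. Then for all integers n ≥ 1: x_{4n-3} = d·α^n·∏_{p=0}^{n-2}( A^{2p+2} + B·b·d·∑_{i=0}^{2p+1} A^i·α^{2p+1-i} ) / ∏_{p=0}^{n-1}( A^{2p+1} + B·b·d·∑_{i=0}^{2p} A^i·α^{2p-i} ), and x_{4n-1} = b·α^n·∏_{p=0}^{n-1}( A^{2p+1} + B·b·d·∑_{i=0}^{2p} A^i·α^{2p-i} ) / ∏_{p=0}^{n-1}( A^{2p+2} + B·b·d·∑_{i=0}^{2p+1} A^i·α^{2p+1-i} ). -/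
open Filter Finset

def Qt (α A B b d : ℝ) (p : ℕ) : ℝ :=
  A ^ (2 * p + 1) + B * b * d * ∑ i ∈ Finset.range (2 * p + 1), A ^ i * α ^ (2 * p - i)

def Pt (α A B b d : ℝ) (p : ℕ) : ℝ :=
  A ^ (2 * p + 2) + B * b * d * ∑ i ∈ Finset.range (2 * p + 2), A ^ i * α ^ (2 * p + 1 - i)

lemma id1 (α A B b d : ℝ) (m : ℕ) :
    A * Qt α A B b d m + B * b * d * α ^ (2 * m + 1) = Pt α A B b d m := by
  unfold Qt Pt
  conv_rhs => rw [Finset.sum_range_succ']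
  simp only [Nat.add_sub_add_right, pow_zero, Nat.sub_zero, one_mul]
  rw [show (∑ i ∈ Finset.range (2*m+1), A ^ (i+1) * α ^ (2*m-i))
      = A * ∑ i ∈ Finset.range (2*m+1), A ^ i * α ^ (2*m-i) from by
    rw [Finset.mul_sum]; apply Finset.sum_congr rfl; intros; ring]
  ring

lemma id2 (α A B b d : ℝ) (m : ℕ) :
    A * Pt α A B b d m + B * b * d * α ^ (2 * m + 2) = Qt α A B b d (m + 1) := by
  unfold Qt Pt
  conv_rhs => rw [show 2 * (m+1) + 1 = (2*m+2)+1 from by ring, Finset.sum_range_succ']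
  simp only [Nat.add_sub_add_right, pow_zero, Nat.sub_zero, one_mul]
  have : ∀ i ∈ Finset.range (2*m+2), A ^ (i+1) * α ^ (2*(m+1)-(i+1)) = A * (A ^ i * α ^ (2*m+1-i)) := by
    intro i hi
    rw [show 2*(m+1)-(i+1) = 2*m+1-i from by omega]; ring
  rw [Finset.sum_congr rfl this, ← Finset.mul_sum]
  rw [show 2*(m+1) = 2*m+2 from by ring]
  ring

lemma key (α A B b d : ℝ) (x : ℤ → ℝ)
    (hx3 : x (-3) = d) (hx1 : x (-1) = b)
    (hwd : ∀ n : ℤ, 0 ≤ n → A + B * x (n - 1) * x (n - 3) ≠ 0)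
    (hrec : ∀ n : ℤ, 0 ≤ n →
      x (n + 1) = α * x (n - 3) / (A + B * x (n - 1) * x (n - 3))) :
    ∀ k : ℕ,
      (∏ p ∈ Finset.range (k+1), Qt α A B b d p) ≠ 0 ∧
      (∏ p ∈ Finset.range (k+1), Pt α A B b d p) ≠ 0 ∧
      x (4*(k:ℤ)+1) = d * α^(k+1) * (∏ p ∈ Finset.range k, Pt α A B b d p) /
        (∏ p ∈ Finset.range (k+1), Qt α A B b d p) ∧
      x (4*(k:ℤ)+3) = b * α^(k+1) * (∏ p ∈ Finset.range (k+1), Qt α A B b d p) /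
        (∏ p ∈ Finset.range (k+1), Pt α A B b d p) := by
  intro k
  induction k with
  | zero =>
    have hQ0 : Qt α A B b d 0 = A + B * b * d := by simp [Qt]
    have hQ0ne : Qt α A B b d 0 ≠ 0 := by
      have h := hwd 0 (le_refl _)
      rw [show (0:ℤ)-1 = -1 from by norm_num, show (0:ℤ)-3 = -3 from by norm_num,
        hx1, hx3] at h
      rw [hQ0]; exact h
    have h0 := hrec 0 (le_refl _)
    rw [show (0:ℤ)-1 = -1 from by norm_num, show (0:ℤ)-3 = -3 from by norm_num,
      show (0:ℤ)+1 = 1 from by norm_num, hx1, hx3] at h0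
    have hx1v : x 1 = α * d / Qt α A B b d 0 := by rw [h0, hQ0]
    have h2 := hrec 2 (by norm_num)
    rw [show (2:ℤ)-1 = 1 from by norm_num, show (2:ℤ)-3 = -1 from by norm_num,
      show (2:ℤ)+1 = 3 from by norm_num, hx1] at h2
    have hD : A + B * x 1 * b = Pt α A B b d 0 / Qt α A B b d 0 := by
      rw [hx1v, eq_div_iff hQ0ne]
      field_simp
      linear_combination id1 α A B b d 0
    have hP0ne : Pt α A B b d 0 ≠ 0 := by
      have h := hwd 2 (by norm_num)
      rw [show (2:ℤ)-1 = 1 from by norm_num, show (2:ℤ)-3 = -1 from by norm_num,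
        hx1, hD] at h
      intro hh; exact h (by rw [hh, zero_div])
    have hx3v : x 3 = b * α * Qt α A B b d 0 / Pt α A B b d 0 := by
      rw [h2, hD, div_div_eq_mul_div]
      ring
    refine ⟨by simpa using hQ0ne, by simpa using hP0ne, ?_, ?_⟩
    · rw [show (4*((0:ℕ):ℤ)+1) = 1 from by norm_num, hx1v,
        Finset.prod_range_one, Finset.prod_range_zero]
      ring
    · rw [show (4*((0:ℕ):ℤ)+3) = 3 from by norm_num, hx3v,
        Finset.prod_range_one, Finset.prod_range_one]
      ring
  | succ k ih =>
    obtain ⟨hq, hp, h3, h1⟩ := ih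
    rw [Finset.prod_range_succ] at hp
    rw [Finset.prod_range_succ (Qt α A B b d) k] at hq h3 h1
    rw [Finset.prod_range_succ (Pt α A B b d) k] at h1
    have hPtk : Pt α A B b d k ≠ 0 := fun h => hp (by rw [h, mul_zero])
    have hDpk : (∏ p ∈ Finset.range k, Pt α A B b d p) ≠ 0 :=
      fun h => hp (by rw [h, zero_mul])
    have hQtk : Qt α A B b d k ≠ 0 := fun h => hq (by rw [h, mul_zero])
    have hDqk : (∏ p ∈ Finset.range k, Qt α A B b d p) ≠ 0 :=
      fun h => hq (by rw [h, zero_mul])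
    have h4 := hrec (4*(k:ℤ)+4) (by positivity)
    rw [show (4*(k:ℤ)+4)-3 = 4*k+1 from by ring, show (4*(k:ℤ)+4)-1 = 4*k+3 from by ring,
      show (4*(k:ℤ)+4)+1 = 4*k+5 from by ring] at h4
    have hD1 : A + B * x (4*(k:ℤ)+3) * x (4*(k:ℤ)+1)
        = Qt α A B b d (k+1) / Pt α A B b d k := by
      rw [h1, h3, eq_div_iff hPtk, ← id2 α A B b d k]
      field_simp
      ring
    have hQ1ne : Qt α A B b d (k+1) ≠ 0 := by
      have h := hwd (4*(k:ℤ)+4) (by positivity)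
      rw [show (4*(k:ℤ)+4)-3 = 4*k+1 from by ring, show (4*(k:ℤ)+4)-1 = 4*k+3 from by ring,
        hD1] at h
      intro hh; exact h (by rw [hh, zero_div])
    have hx5 : x (4*(k:ℤ)+5) = d * α^(k+2) *
        ((∏ p ∈ Finset.range k, Pt α A B b d p) * Pt α A B b d k) /
        ((∏ p ∈ Finset.range k, Qt α A B b d p) * Qt α A B b d k * Qt α A B b d (k+1)) := by
      rw [h4, hD1, h3, div_div_eq_mul_div,
        div_eq_div_iff hQ1ne (mul_ne_zero (mul_ne_zero hDqk hQtk) hQ1ne)]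
      field_simp [hDqk, hQtk]
      ring
    have h6 := hrec (4*(k:ℤ)+6) (by positivity)
    rw [show (4*(k:ℤ)+6)-3 = 4*k+3 from by ring, show (4*(k:ℤ)+6)-1 = 4*k+5 from by ring,
      show (4*(k:ℤ)+6)+1 = 4*k+7 from by ring] at h6
    have hD2 : A + B * x (4*(k:ℤ)+5) * x (4*(k:ℤ)+3)
        = Pt α A B b d (k+1) / Qt α A B b d (k+1) := by
      rw [hx5, h1, eq_div_iff hQ1ne, ← id1 α A B b d (k+1)]
      field_simp
      ring
    have hP1ne : Pt α A B b d (k+1) ≠ 0 := by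
      have h := hwd (4*(k:ℤ)+6) (by positivity)
      rw [show (4*(k:ℤ)+6)-3 = 4*k+3 from by ring, show (4*(k:ℤ)+6)-1 = 4*k+5 from by ring,
        hD2] at h
      intro hh; exact h (by rw [hh, zero_div])
    have hx7 : x (4*(k:ℤ)+7) = b * α^(k+2) *
        ((∏ p ∈ Finset.range k, Qt α A B b d p) * Qt α A B b d k * Qt α A B b d (k+1)) /
        ((∏ p ∈ Finset.range k, Pt α A B b d p) * Pt α A B b d k * Pt α A B b d (k+1)) := by
      rw [h6, hD2, h1, div_div_eq_mul_div,
        div_eq_div_iff hP1ne (mul_ne_zero (mul_ne_zero hDpk hPtk) hP1ne)]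
      field_simp [hDpk, hPtk]
      ring
    have ecast : (((k+1:ℕ)):ℤ) = (k:ℤ)+1 := by push_cast; ring
    refine ⟨?_, ?_, ?_, ?_⟩
    · rw [Finset.prod_range_succ (Qt α A B b d) (k+1), Finset.prod_range_succ (Qt α A B b d) k]
      exact mul_ne_zero (mul_ne_zero hDqk hQtk) hQ1ne
    · rw [Finset.prod_range_succ (Pt α A B b d) (k+1), Finset.prod_range_succ (Pt α A B b d) k]
      exact mul_ne_zero (mul_ne_zero hDpk hPtk) hP1ne
    · rw [ecast, show 4*((k:ℤ)+1)+1 = 4*(k:ℤ)+5 from by ring,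
        Finset.prod_range_succ (Qt α A B b d) (k+1), Finset.prod_range_succ (Qt α A B b d) k,
        Finset.prod_range_succ (Pt α A B b d) k]
      exact hx5
    · rw [ecast, show 4*((k:ℤ)+1)+3 = 4*(k:ℤ)+7 from by ring,
        Finset.prod_range_succ (Qt α A B b d) (k+1), Finset.prod_range_succ (Qt α A B b d) k,
        Finset.prod_range_succ (Pt α A B b d) (k+1), Finset.prod_range_succ (Pt α A B b d) k]
      exact hx7

/-- Explicit formula for the subsequences `x_{4n-3}` and `x_{4n-1}` of a well-defined
solution of `x_{n+1} = α x_{n-3} / (A + B x_{n-1} x_{n-3})`. -/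
theorem stmt_0 (α A B a b c d : ℝ) (hα : α ≠ 0) (hB : B ≠ 0)
    (ha : a ≠ 0) (hb : b ≠ 0) (hc : c ≠ 0) (hd : d ≠ 0)
    (x : ℤ → ℝ)
    (hx3 : x (-3) = d) (hx2 : x (-2) = c) (hx1 : x (-1) = b) (hx0 : x 0 = a)
    (hwd : ∀ n : ℤ, 0 ≤ n → A + B * x (n - 1) * x (n - 3) ≠ 0)
    (hrec : ∀ n : ℤ, 0 ≤ n →
      x (n + 1) = α * x (n - 3) / (A + B * x (n - 1) * x (n - 3))) :
    ∀ n : ℕ, 1 ≤ n →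
      x (4 * (n : ℤ) - 3) =
        d * α ^ n *
          (∏ p ∈ Finset.range (n - 1),
            (A ^ (2 * p + 2) +
              B * b * d * ∑ i ∈ Finset.range (2 * p + 2), A ^ i * α ^ (2 * p + 1 - i))) /
          (∏ p ∈ Finset.range n,
            (A ^ (2 * p + 1) +
              B * b * d * ∑ i ∈ Finset.range (2 * p + 1), A ^ i * α ^ (2 * p - i))) ∧
      x (4 * (n : ℤ) - 1) =
        b * α ^ n *
          (∏ p ∈ Finset.range n,
            (A ^ (2 * p + 1) +
              B * b * d * ∑ i ∈ Finset.range (2 * p + 1), A ^ i * α ^ (2 * p - i))) /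
          (∏ p ∈ Finset.range n,
            (A ^ (2 * p + 2) +
              B * b * d * ∑ i ∈ Finset.range (2 * p + 2), A ^ i * α ^ (2 * p + 1 - i))) := by
  intro n hn
  obtain ⟨k, rfl⟩ : ∃ k, n = k + 1 := ⟨n - 1, by omega⟩
  obtain ⟨hq, hp, h3, h1⟩ := key α A B b d x hx3 hx1 hwd hrec k
  constructor
  · rw [show 4*(((k+1:ℕ)):ℤ)-3 = 4*(k:ℤ)+1 from by push_cast; ring,
      show (k+1)-1 = k from rfl]
    exact h3
  · rw [show 4*(((k+1:ℕ)):ℤ)-1 = 4*(k:ℤ)+3 from by push_cast; ring]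
    exact h1
end

section
/- Let (x_n)_{n≥-3} be a well-defined solution of the difference equation. Then for all integers n ≥ 1: x_{4n-2} = c·α^n·∏_{p=0}^{n-2}( A^{2p+2} + B·a·c·∑_{i=0}^{2p+1} A^i·α^{2p+1-i} ) / ∏_{p=0}^{n-1}( A^{2p+1} + B·a·c·∑_{i=0}^{2p} A^i·α^{2p-i} ), and x_{4n} = a·α^n·∏_{p=0}^{n-1}( A^{2p+1} + B·a·c·∑_{i=0}^{2p} A^i·α^{2p-i} ) / ∏_{p=0}^{n-1}( A^{2p+2} + B·a·c·∑_{i=0}^{2p+1} A^i·α^{2p+1-i} ). -/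
open Filter Finset

private def Sseq (α A B a c : ℝ) : ℕ → ℝ
  | 0 => 1
  | (k+1) => A * Sseq α A B a c k + B * a * c * α ^ k

private lemma Sseq_formula (α A B a c : ℝ) (k : ℕ) :
    Sseq α A B a c (k+1) =
      A ^ (k+1) + B * a * c * ∑ i ∈ Finset.range (k+1), A ^ i * α ^ (k - i) := by
  induction k with
  | zero => simp [Sseq]
  | succ k ih =>
    rw [show k+1+1 = (k+1)+1 from rfl, Sseq, ih,
      Finset.sum_range_succ' (fun i => A ^ i * α ^ (k + 1 - i))]
    simp only [pow_zero, one_mul, Nat.succ_sub_succ, Nat.sub_zero]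
    have hsum : ∑ i ∈ Finset.range (k+1), A ^ (i+1) * α ^ (k - i)
        = A * ∑ i ∈ Finset.range (k+1), A ^ i * α ^ (k - i) := by
      rw [Finset.mul_sum]
      exact Finset.sum_congr rfl fun i _ => by ring
    rw [hsum]
    ring

/-- Explicit formula for the subsequences `x_{4n-2}` and `x_{4n}` of a well-defined
solution of `x_{n+1} = α x_{n-3} / (A + B x_{n-1} x_{n-3})`. -/
theorem stmt_1 (α A B a b c d : ℝ) (hα : α ≠ 0) (hB : B ≠ 0)
    (ha : a ≠ 0) (hb : b ≠ 0) (hc : c ≠ 0) (hd : d ≠ 0)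
    (x : ℤ → ℝ)
    (hx3 : x (-3) = d) (hx2 : x (-2) = c) (hx1 : x (-1) = b) (hx0 : x 0 = a)
    (hwd : ∀ n : ℤ, 0 ≤ n → A + B * x (n - 1) * x (n - 3) ≠ 0)
    (hrec : ∀ n : ℤ, 0 ≤ n →
      x (n + 1) = α * x (n - 3) / (A + B * x (n - 1) * x (n - 3))) :
    ∀ n : ℕ, 1 ≤ n →
      x (4 * (n : ℤ) - 2) =
        c * α ^ n *
          (∏ p ∈ Finset.range (n - 1),
            (A ^ (2 * p + 2) +
              B * a * c * ∑ i ∈ Finset.range (2 * p + 2), A ^ i * α ^ (2 * p + 1 - i))) /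
          (∏ p ∈ Finset.range n,
            (A ^ (2 * p + 1) +
              B * a * c * ∑ i ∈ Finset.range (2 * p + 1), A ^ i * α ^ (2 * p - i))) ∧
      x (4 * (n : ℤ)) =
        a * α ^ n *
          (∏ p ∈ Finset.range n,
            (A ^ (2 * p + 1) +
              B * a * c * ∑ i ∈ Finset.range (2 * p + 1), A ^ i * α ^ (2 * p - i))) /
          (∏ p ∈ Finset.range n,
            (A ^ (2 * p + 2) +
              B * a * c * ∑ i ∈ Finset.range (2 * p + 2), A ^ i * α ^ (2 * p + 1 - i))) := by
  set S : ℕ → ℝ := Sseq α A B a c with hS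
  have hS0 : S 0 = 1 := rfl
  have hSrec : ∀ k, S (k+1) = A * S k + B * a * c * α ^ k := fun k => rfl
  set y : ℕ → ℝ := fun m => x (2 * (m : ℤ) - 2) with hy
  have hy0 : y 0 = c := by
    simp only [hy]; norm_num [hx2]
  have hy1 : y 1 = a := by
    simp only [hy]; norm_num [hx0]
  have hyden : ∀ m : ℕ, A + B * y (m+1) * y m ≠ 0 := by
    intro m
    have h := hwd (2*(m:ℤ)+1) (by positivity)
    have e1 : (2*(m:ℤ)+1) - 1 = 2*(((m:ℕ)+1 : ℕ) : ℤ) - 2 := by push_cast; ring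
    have e2 : (2*(m:ℤ)+1) - 3 = 2*(m:ℤ) - 2 := by ring
    rw [e1, e2] at h
    exact h
  have hyrec : ∀ m : ℕ, y (m+2) = α * y m / (A + B * y (m+1) * y m) := by
    intro m
    have h := hrec (2*(m:ℤ)+1) (by positivity)
    have e0 : (2*(m:ℤ)+1) + 1 = 2*(((m:ℕ)+2 : ℕ) : ℤ) - 2 := by push_cast; ring
    have e1 : (2*(m:ℤ)+1) - 1 = 2*(((m:ℕ)+1 : ℕ) : ℤ) - 2 := by push_cast; ring
    have e2 : (2*(m:ℤ)+1) - 3 = 2*(m:ℤ) - 2 := by ring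
    rw [e0, e1, e2] at h
    exact h
  have key : ∀ m : ℕ, S m ≠ 0 ∧ y (m+1) * y m = a * c * α ^ m / S m := by
    intro m
    induction m with
    | zero =>
      refine ⟨by rw [hS0]; exact one_ne_zero, ?_⟩
      rw [hy1, hy0, hS0]; simp
    | succ m ih =>
      obtain ⟨hSm, hprod⟩ := ih
      have hprod' : y (m+1) * y m * S m = a * c * α ^ m := by
        rw [hprod]; field_simp
      have hden' : A + B * y (m+1) * y m = S (m+1) / S m := by
        rw [eq_div_iff hSm, hSrec]; linear_combination B * hprod' 
      have hSm1 : S (m+1) ≠ 0 := by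
        intro h0
        exact hyden m (by rw [hden', h0, zero_div])
      refine ⟨hSm1, ?_⟩
      have : y (m+2) * y (m+1) = α * (y (m+1) * y m) / (S (m+1) / S m) := by
        rw [hyrec m, hden']; ring
      rw [this, hprod]
      field_simp
      ring
  have hSne : ∀ m, S m ≠ 0 := fun m => (key m).1
  have ystep : ∀ m : ℕ, y (m+2) = α * y m * S m / S (m+1) := by
    intro m
    have hSm := (key m).1
    have hSm1 := (key (m+1)).1
    have hprod' : y (m+1) * y m * S m = a * c * α ^ m := by
      rw [(key m).2]; field_simp
    have hden' : A + B * y (m+1) * y m = S (m+1) / S m := by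
      rw [eq_div_iff hSm, hSrec]; linear_combination B * hprod'
    rw [hyrec m, hden']
    rw [div_div_eq_mul_div]
  have even : ∀ n : ℕ, y (2*n) =
      c * α ^ n * (∏ k ∈ Finset.range n, S (2*k)) / (∏ k ∈ Finset.range n, S (2*k+1)) := by
    intro n
    induction n with
    | zero => simpa using hy0
    | succ n ih =>
      have h2 : 2*(n+1) = (2*n)+2 := by ring
      rw [h2, ystep (2*n), ih, Finset.prod_range_succ, Finset.prod_range_succ]
      have p1 : (∏ k ∈ Finset.range n, S (2*k+1)) ≠ 0 :=
        Finset.prod_ne_zero_iff.mpr fun k _ => hSne _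
      have p2 : S (2*n+1) ≠ 0 := hSne _
      field_simp
      ring
  have odd : ∀ n : ℕ, y (2*n+1) =
      a * α ^ n * (∏ k ∈ Finset.range n, S (2*k+1)) / (∏ k ∈ Finset.range n, S (2*k+2)) := by
    intro n
    induction n with
    | zero => simpa using hy1
    | succ n ih =>
      have h2 : 2*(n+1)+1 = (2*n+1)+2 := by ring
      rw [h2, ystep (2*n+1), ih, Finset.prod_range_succ, Finset.prod_range_succ]
      have p1 : (∏ k ∈ Finset.range n, S (2*k+2)) ≠ 0 :=
        Finset.prod_ne_zero_iff.mpr fun k _ => hSne _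
      have p2 : S (2*n+2) ≠ 0 := hSne _
      have e : 2*n+1+1 = 2*n+2 := by ring
      rw [e]
      field_simp
      ring
  have heq_odd : ∀ m : ℕ,
      S (2*m+1) = A ^ (2*m+1) + B * a * c * ∑ i ∈ Finset.range (2*m+1), A ^ i * α ^ (2*m - i) := by
    intro m; rw [hS]; exact Sseq_formula α A B a c (2*m)
  have heq_even : ∀ m : ℕ,
      S (2*m+2) = A ^ (2*m+2) + B * a * c * ∑ i ∈ Finset.range (2*m+2), A ^ i * α ^ (2*m+1 - i) := by
    intro m; rw [hS]
    have := Sseq_formula α A B a c (2*m+1)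
    rw [show 2*m+1+1 = 2*m+2 from rfl] at this
    exact this
  intro n hn
  obtain ⟨n', rfl⟩ : ∃ n', n = n' + 1 := ⟨n - 1, (Nat.succ_pred_eq_of_pos hn).symm⟩
  constructor
  · have hx4n2 : x (4 * ((n'+1 : ℕ) : ℤ) - 2) = y (2*(n'+1)) := by
      simp only [hy]; congr 1; push_cast; ring
    rw [hx4n2, even (n'+1)]
    congr 1
    · congr 1
      rw [Finset.prod_range_succ']
      simp only [hS0, mul_one, Nat.add_sub_cancel]
      refine Finset.prod_congr rfl fun k _ => ?_
      rw [show 2*(k+1) = 2*k+2 by ring, heq_even]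
    · exact Finset.prod_congr rfl fun k _ => heq_odd k
  · have hx4n : x (4 * ((n'+1 : ℕ) : ℤ)) = y (2*(n'+1)+1) := by
      simp only [hy]; congr 1; push_cast; ring
    rw [hx4n, odd (n'+1)]
    congr 1
    · congr 1
      exact Finset.prod_congr rfl fun k _ => heq_odd k
    · exact Finset.prod_congr rfl fun k _ => heq_even k
end

section
/- Assume A ≠ α, and let (x_n)_{n≥-3} be a well-defined solution of the difference equation. Then for all integers n ≥ 1: x_{4n-3} = d·α^n·(A−α)·∏_{p=0}^{n-2} P_{2p+2}(b,d) / ∏_{p=0}^{n-1} P_{2p+1}(b,d), and x_{4n-1} = b·α^n·∏_{p=0}^{n-1} P_{2p+1}(b,d) / ∏_{p=0}^{n-1} P_{2p+2}(b,d), where P_k(u,v) = A^k·(A − α + B·u·v) − B·u·v·α^k. -/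
open Filter Finset

/-- Simplified formula (case `A ≠ α`) for the subsequences `x_{4n-3}` and `x_{4n-1}`,
where `P k u v = A^k (A - α + B u v) - B u v α^k`. -/
theorem stmt_2 (α A B a b c d : ℝ) (hα : α ≠ 0) (hB : B ≠ 0) (hAα : A ≠ α)
    (ha : a ≠ 0) (hb : b ≠ 0) (hc : c ≠ 0) (hd : d ≠ 0)
    (x : ℤ → ℝ)
    (hx3 : x (-3) = d) (hx2 : x (-2) = c) (hx1 : x (-1) = b) (hx0 : x 0 = a)
    (hwd : ∀ n : ℤ, 0 ≤ n → A + B * x (n - 1) * x (n - 3) ≠ 0)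
    (hrec : ∀ n : ℤ, 0 ≤ n →
      x (n + 1) = α * x (n - 3) / (A + B * x (n - 1) * x (n - 3)))
    (P : ℕ → ℝ → ℝ → ℝ)
    (hP : ∀ (k : ℕ) (u v : ℝ),
      P k u v = A ^ k * (A - α + B * u * v) - B * u * v * α ^ k) :
    ∀ n : ℕ, 1 ≤ n →
      x (4 * (n : ℤ) - 3) =
        d * α ^ n * (A - α) * (∏ p ∈ Finset.range (n - 1), P (2 * p + 2) b d) /
          (∏ p ∈ Finset.range n, P (2 * p + 1) b d) ∧
      x (4 * (n : ℤ) - 1) =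
        b * α ^ n * (∏ p ∈ Finset.range n, P (2 * p + 1) b d) /
          (∏ p ∈ Finset.range n, P (2 * p + 2) b d) := by
  have hA0 : A - α ≠ 0 := sub_ne_zero.mpr hAα
  have key : ∀ k : ℕ, A * P k b d + B * b * d * α ^ k * (A - α) = P (k + 1) b d := by
    intro k; rw [hP, hP]; ring
  have hP0 : P 0 b d = A - α := by rw [hP]; ring
  have main : ∀ m : ℕ,
      (∀ k, k ≤ 2 * m → P k b d ≠ 0) ∧
      x (4 * (m : ℤ) - 3) =
        d * α ^ m * (A - α) * (∏ p ∈ Finset.range m, P (2 * p + 2) b d) /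
          ((∏ p ∈ Finset.range m, P (2 * p + 1) b d) * P (2 * m) b d) ∧
      x (4 * (m : ℤ) - 1) =
        b * α ^ m * (∏ p ∈ Finset.range m, P (2 * p + 1) b d) /
          (∏ p ∈ Finset.range m, P (2 * p + 2) b d) := by
    intro m
    induction m with
    | zero =>
      refine ⟨?_, ?_, ?_⟩
      · intro k hk
        interval_cases k
        rw [hP0]; exact hA0
      · simp only [Nat.cast_zero, Finset.range_zero, Finset.prod_empty, mul_zero]
        rw [hP0]
        norm_num
        rw [hx3]
        field_simp
      · simp only [Nat.cast_zero, Finset.range_zero, Finset.prod_empty]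
        norm_num
        rw [hx1]
    | succ m ih =>
      obtain ⟨hnz, hu, hv⟩ := ih
      set Qm := ∏ p ∈ Finset.range m, P (2 * p + 1) b d with hQdef
      set Rm := ∏ p ∈ Finset.range m, P (2 * p + 2) b d with hRdef
      have hQ : Qm ≠ 0 := by
        apply Finset.prod_ne_zero_iff.mpr
        intro p hp
        exact hnz _ (by simp at hp; omega)
      have hR : Rm ≠ 0 := by
        apply Finset.prod_ne_zero_iff.mpr
        intro p hp
        exact hnz _ (by simp at hp; omega)
      have hP2m : P (2 * m) b d ≠ 0 := hnz _ le_rfl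
      -- product x(4m-1) x(4m-3)
      have h1 : x (4 * (m : ℤ) - 1) * x (4 * (m : ℤ) - 3)
          = b * d * α ^ (2 * m) * (A - α) / P (2 * m) b d := by
        rw [hu, hv]
        field_simp
        ring
      have h2 : A + B * x (4 * (m : ℤ) - 1) * x (4 * (m : ℤ) - 3)
          = P (2 * m + 1) b d / P (2 * m) b d := by
        rw [mul_assoc, h1]
        field_simp
        linear_combination key (2 * m)
      have hwd1 : A + B * x (4 * (m : ℤ) - 1) * x (4 * (m : ℤ) - 3) ≠ 0 := by
        have := hwd (4 * (m : ℤ)) (by positivity)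
        convert this using 3 <;> ring
      have hP21 : P (2 * m + 1) b d ≠ 0 := by
        rw [h2] at hwd1
        exact fun h => hwd1 (by rw [h, zero_div])
      have hu' : x (4 * (m : ℤ) + 1)
          = d * α ^ (m + 1) * (A - α) * Rm / (Qm * P (2 * m + 1) b d) := by
        have hr := hrec (4 * (m : ℤ)) (by positivity)
        rw [hr, h2, hu]
        field_simp
        ring
      have h3 : x (4 * (m : ℤ) + 1) * x (4 * (m : ℤ) - 1)
          = b * d * α ^ (2 * m + 1) * (A - α) / P (2 * m + 1) b d := by
        rw [hu', hv]
        field_simp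
        ring
      have h4 : A + B * x (4 * (m : ℤ) + 1) * x (4 * (m : ℤ) - 1)
          = P (2 * m + 2) b d / P (2 * m + 1) b d := by
        rw [mul_assoc, h3]
        field_simp
        linear_combination key (2 * m + 1)
      have hwd2 : A + B * x (4 * (m : ℤ) + 1) * x (4 * (m : ℤ) - 1) ≠ 0 := by
        have := hwd (4 * (m : ℤ) + 2) (by positivity)
        convert this using 3 <;> ring
      have hP22 : P (2 * m + 2) b d ≠ 0 := by
        rw [h4] at hwd2
        exact fun h => hwd2 (by rw [h, zero_div])
      have hv' : x (4 * (m : ℤ) + 3)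
          = b * α ^ (m + 1) * (Qm * P (2 * m + 1) b d) / (Rm * P (2 * m + 2) b d) := by
        have hr := hrec (4 * (m : ℤ) + 2) (by positivity)
        have e1 : (4 * (m : ℤ) + 2 + 1) = 4 * (m : ℤ) + 3 := by ring
        have e2 : (4 * (m : ℤ) + 2 - 3) = 4 * (m : ℤ) - 1 := by ring
        have e3 : (4 * (m : ℤ) + 2 - 1) = 4 * (m : ℤ) + 1 := by ring
        rw [e1, e2, e3] at hr
        rw [hr, h4, hv]
        field_simp
        ring
      refine ⟨?_, ?_, ?_⟩
      · intro k hk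
        rcases Nat.lt_or_ge k (2 * m + 1) with h | h
        · exact hnz k (by omega)
        · rcases (by omega : k = 2 * m + 1 ∨ k = 2 * m + 2) with rfl | rfl
          · exact hP21
          · exact hP22
      · have e : (4 * ((m : ℤ) + 1) - 3) = 4 * (m : ℤ) + 1 := by ring
        push_cast
        rw [e, hu', Finset.prod_range_succ, Finset.prod_range_succ, ← hQdef, ← hRdef]
        have e2 : 2 * (m + 1) = 2 * m + 2 := by ring
        rw [e2]
        field_simp
      · have e : (4 * ((m : ℤ) + 1) - 1) = 4 * (m : ℤ) + 3 := by ring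
        push_cast
        rw [e, hv', Finset.prod_range_succ, Finset.prod_range_succ, ← hQdef, ← hRdef]
  intro n hn
  obtain ⟨m, rfl⟩ := Nat.exists_eq_add_of_le hn
  obtain ⟨hnz, hu, hv⟩ := main (1 + m)
  have hP2n : P (2 * (1 + m)) b d ≠ 0 := hnz _ le_rfl
  have hQ : (∏ p ∈ Finset.range (1 + m), P (2 * p + 1) b d) ≠ 0 := by
    apply Finset.prod_ne_zero_iff.mpr
    intro p hp
    exact hnz _ (by simp at hp; omega)
  refine ⟨?_, hv⟩
  rw [hu]
  have e : 1 + m - 1 = m := by omega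
  rw [e]
  have hsplit : (∏ p ∈ Finset.range (1 + m), P (2 * p + 2) b d)
      = (∏ p ∈ Finset.range m, P (2 * p + 2) b d) * P (2 * (1 + m)) b d := by
    rw [show 1 + m = m + 1 by ring, Finset.prod_range_succ]
    congr 2
  rw [hsplit]
  field_simp
end

section
/- Assume A ≠ α, and let (x_n)_{n≥-3} be a well-defined solution of the difference equation. Then for all integers n ≥ 1: x_{4n-2} = c·α^n·(A−α)·∏_{p=0}^{n-2} P_{2p+2}(a,c) / ∏_{p=0}^{n-1} P_{2p+1}(a,c), and x_{4n} = a·α^n·∏_{p=0}^{n-1} P_{2p+1}(a,c) / ∏_{p=0}^{n-1} P_{2p+2}(a,c), where P_k(u,v) = A^k·(A − α + B·u·v) − B·u·v·α^k. -/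
open Filter Finset

/-- Simplified formula (case `A ≠ α`) for the subsequences `x_{4n-2}` and `x_{4n}`,
where `P k u v = A^k (A - α + B u v) - B u v α^k`. -/
theorem stmt_3 (α A B a b c d : ℝ) (hα : α ≠ 0) (hB : B ≠ 0) (hAα : A ≠ α)
    (ha : a ≠ 0) (hb : b ≠ 0) (hc : c ≠ 0) (hd : d ≠ 0)
    (x : ℤ → ℝ)
    (hx3 : x (-3) = d) (hx2 : x (-2) = c) (hx1 : x (-1) = b) (hx0 : x 0 = a)
    (hwd : ∀ n : ℤ, 0 ≤ n → A + B * x (n - 1) * x (n - 3) ≠ 0)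
    (hrec : ∀ n : ℤ, 0 ≤ n →
      x (n + 1) = α * x (n - 3) / (A + B * x (n - 1) * x (n - 3)))
    (P : ℕ → ℝ → ℝ → ℝ)
    (hP : ∀ (k : ℕ) (u v : ℝ),
      P k u v = A ^ k * (A - α + B * u * v) - B * u * v * α ^ k) :
    ∀ n : ℕ, 1 ≤ n →
      x (4 * (n : ℤ) - 2) =
        c * α ^ n * (A - α) * (∏ p ∈ Finset.range (n - 1), P (2 * p + 2) a c) /
          (∏ p ∈ Finset.range n, P (2 * p + 1) a c) ∧
      x (4 * (n : ℤ)) =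
        a * α ^ n * (∏ p ∈ Finset.range n, P (2 * p + 1) a c) /
          (∏ p ∈ Finset.range n, P (2 * p + 2) a c) := by
  set Q : ℕ → ℝ := fun k => A ^ k * (A - α + B * a * c) - B * a * c * α ^ k with hQ
  have hQ0 : Q 0 = A - α := by simp [hQ]
  have hAα' : A - α ≠ 0 := sub_ne_zero.mpr hAα
  -- key fact: Q k ≠ 0 and product formula for consecutive even terms
  have key : ∀ k : ℕ, Q k ≠ 0 ∧
      x (2 * (k : ℤ) - 2) * x (2 * (k : ℤ)) = a * c * α ^ k * (A - α) / Q k := by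
    intro k
    induction k with
    | zero =>
      refine ⟨by rw [hQ0]; exact hAα', ?_⟩
      norm_num [hx2, hx0, hQ0]
      field_simp
    | succ k ih =>
      obtain ⟨hQk, hprod⟩ := ih
      have hid : A * Q k + B * a * c * α ^ k * (A - α) = Q (k + 1) := by
        simp only [hQ, pow_succ]; ring
      have hden0 := hwd (2 * (k : ℤ) + 1) (by positivity)
      have idx1 : (2 * (k : ℤ) + 1) - 1 = 2 * k := by ring
      have idx3 : (2 * (k : ℤ) + 1) - 3 = 2 * k - 2 := by ring
      rw [idx1, idx3] at hden0
      have e : A + B * x (2 * (k : ℤ)) * x (2 * (k : ℤ) - 2) = Q (k + 1) / Q k := by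
        rw [mul_assoc, mul_comm (x (2 * (k : ℤ))), hprod, ← hid]
        field_simp
      have hQk1 : Q (k + 1) ≠ 0 := by
        intro h
        exact hden0 (by rw [e, h, zero_div])
      refine ⟨hQk1, ?_⟩
      have hrec0 := hrec (2 * (k : ℤ) + 1) (by positivity)
      rw [idx1, idx3] at hrec0
      have idxk : (2 * ((k : ℤ) + 1) - 2) = 2 * k := by ring
      have idxk2 : (2 * ((k : ℤ) + 1)) = 2 * (k : ℤ) + 1 + 1 := by ring
      push_cast
      rw [idxk, idxk2, hrec0, e]
      rw [show x (2 * (k : ℤ)) * (α * x (2 * (k : ℤ) - 2) / (Q (k + 1) / Q k))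
          = α * (x (2 * (k : ℤ) - 2) * x (2 * (k : ℤ))) / (Q (k + 1) / Q k) from by ring,
        hprod]
      field_simp
      ring
  -- the one-step formula
  have step : ∀ k : ℕ, x (2 * (k : ℤ) + 2) = α * x (2 * (k : ℤ) - 2) * Q k / Q (k + 1) := by
    intro k
    obtain ⟨hQk, hprod⟩ := key k
    have hQk1 := (key (k + 1)).1
    have hid : A * Q k + B * a * c * α ^ k * (A - α) = Q (k + 1) := by
      simp only [hQ, pow_succ]; ring
    have hrec0 := hrec (2 * (k : ℤ) + 1) (by positivity)
    have idx1 : (2 * (k : ℤ) + 1) - 1 = 2 * k := by ring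
    have idx3 : (2 * (k : ℤ) + 1) - 3 = 2 * k - 2 := by ring
    rw [idx1, idx3] at hrec0
    have e : A + B * x (2 * (k : ℤ)) * x (2 * (k : ℤ) - 2) = Q (k + 1) / Q k := by
      rw [mul_assoc, mul_comm (x (2 * (k : ℤ))), hprod, ← hid]
      field_simp
    have idxk2 : (2 * (k : ℤ) + 2) = 2 * (k : ℤ) + 1 + 1 := by ring
    rw [idxk2, hrec0, e, div_div_eq_mul_div]
  -- main induction (shifted): statement for n = m + 1
  have main : ∀ m : ℕ,
      x (4 * ((m : ℤ) + 1) - 2) =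
        c * α ^ (m + 1) * (A - α) * (∏ p ∈ Finset.range m, Q (2 * p + 2)) /
          (∏ p ∈ Finset.range (m + 1), Q (2 * p + 1)) ∧
      x (4 * ((m : ℤ) + 1)) =
        a * α ^ (m + 1) * (∏ p ∈ Finset.range (m + 1), Q (2 * p + 1)) /
          (∏ p ∈ Finset.range (m + 1), Q (2 * p + 2)) := by
    intro m
    induction m with
    | zero =>
      constructor
      · have h0 := step 0
        rw [show ((0:ℕ):ℤ) = 0 from rfl, show (2 * (0:ℤ) + 2 : ℤ) = 2 from by norm_num,
          show (2 * (0:ℤ) - 2 : ℤ) = -2 from by norm_num, hx2] at h0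
        rw [show (4 * (((0:ℕ):ℤ) + 1) - 2 : ℤ) = 2 from by norm_num, h0]
        simp [hQ0]
        ring
      · have h1 := step 1
        rw [show ((1:ℕ):ℤ) = 1 from rfl, show (2 * (1:ℤ) + 2 : ℤ) = 4 from by norm_num,
          show (2 * (1:ℤ) - 2 : ℤ) = 0 from by norm_num, hx0] at h1
        rw [show (4 * (((0:ℕ):ℤ) + 1) : ℤ) = 4 from by norm_num, h1]
        simp
        ring
    | succ m ih =>
      obtain ⟨ih2, ih0⟩ := ih
      have hN : (∏ p ∈ Finset.range m, Q (2 * p + 2)) ≠ 0 :=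
        Finset.prod_ne_zero_iff.mpr fun p _ => (key _).1
      have hD : (∏ p ∈ Finset.range (m + 1), Q (2 * p + 1)) ≠ 0 :=
        Finset.prod_ne_zero_iff.mpr fun p _ => (key _).1
      have hE : (∏ p ∈ Finset.range (m + 1), Q (2 * p + 2)) ≠ 0 :=
        Finset.prod_ne_zero_iff.mpr fun p _ => (key _).1
      constructor
      · have h2 := step (2 * m + 2)
        have idx : (2 * ((2 * (m : ℤ) + 2)) + 2) = 4 * ((m : ℤ) + 1 + 1) - 2 := by ring
        have idx' : (2 * ((2 * (m : ℤ) + 2)) - 2) = 4 * ((m : ℤ) + 1) - 2 := by ring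
        push_cast at h2 ⊢
        rw [idx, idx'] at h2
        rw [h2, ih2]
        rw [Finset.prod_range_succ (fun p => Q (2 * p + 2)) m,
          Finset.prod_range_succ (fun p => Q (2 * p + 1)) (m + 1)]
        have hq1 := (key (2 * m + 2)).1
        have hq2 := (key (2 * m + 3)).1
        rw [show 2 * m + 2 + 1 = 2 * m + 3 from rfl,
          show 2 * (m + 1) + 1 = 2 * m + 3 from by ring]
        field_simp
        ring
      · have h2 := step (2 * m + 3)
        have idx : (2 * ((2 * (m : ℤ) + 3)) + 2) = 4 * ((m : ℤ) + 1 + 1) := by ring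
        have idx' : (2 * ((2 * (m : ℤ) + 3)) - 2) = 4 * ((m : ℤ) + 1) := by ring
        push_cast at h2 ⊢
        rw [idx, idx'] at h2
        rw [h2, ih0]
        rw [Finset.prod_range_succ (fun p => Q (2 * p + 1)) (m + 1),
          Finset.prod_range_succ (fun p => Q (2 * p + 2)) (m + 1)]
        have hq1 := (key (2 * m + 3)).1
        have hq2 := (key (2 * m + 4)).1
        rw [show 2 * m + 3 + 1 = 2 * m + 4 from rfl,
          show 2 * (m + 1) + 1 = 2 * m + 3 from by ring,
          show 2 * (m + 1) + 2 = 2 * m + 4 from by ring]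
        field_simp
        ring
  intro n hn
  obtain ⟨m, rfl⟩ : ∃ m, n = m + 1 := ⟨n - 1, (Nat.succ_pred_eq_of_pos hn).symm⟩
  have := main m
  simp only [hP]
  push_cast
  simpa [hQ, Nat.add_sub_cancel] using this
end

section
/- Assume A = α, and let (x_n)_{n≥-3} be a well-defined solution of the difference equation. Then for all integers n ≥ 1: x_{4n-3} = d·A·∏_{p=0}^{n-2}( A + (2p+2)·B·b·d ) / ∏_{p=0}^{n-1}( A + (2p+1)·B·b·d ), and x_{4n-1} = b·∏_{p=0}^{n-1}( A + (2p+1)·B·b·d ) / ∏_{p=0}^{n-1}( A + (2p+2)·B·b·d ). -/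
set_option maxHeartbeats 1000000

open Filter Finset

/-- Case `A = α`: formulas for `x_{4n-3}` and `x_{4n-1}`. -/
theorem stmt_4 (α A B a b c d : ℝ) (hα : α ≠ 0) (hB : B ≠ 0) (hAα : A = α)
    (ha : a ≠ 0) (hb : b ≠ 0) (hc : c ≠ 0) (hd : d ≠ 0)
    (x : ℤ → ℝ)
    (hx3 : x (-3) = d) (hx2 : x (-2) = c) (hx1 : x (-1) = b) (hx0 : x 0 = a)
    (hwd : ∀ n : ℤ, 0 ≤ n → A + B * x (n - 1) * x (n - 3) ≠ 0)
    (hrec : ∀ n : ℤ, 0 ≤ n →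
      x (n + 1) = α * x (n - 3) / (A + B * x (n - 1) * x (n - 3))) :
    ∀ n : ℕ, 1 ≤ n →
      x (4 * (n : ℤ) - 3) =
        d * A * (∏ p ∈ Finset.range (n - 1), (A + (2 * (p : ℝ) + 2) * B * b * d)) /
          (∏ p ∈ Finset.range n, (A + (2 * (p : ℝ) + 1) * B * b * d)) ∧
      x (4 * (n : ℤ) - 1) =
        b * (∏ p ∈ Finset.range n, (A + (2 * (p : ℝ) + 1) * B * b * d)) /
          (∏ p ∈ Finset.range n, (A + (2 * (p : ℝ) + 2) * B * b * d)) := by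
  subst hAα
  have key : ∀ n : ℕ, 1 ≤ n →
      (x (4 * (n : ℤ) - 3) =
        d * A * (∏ p ∈ Finset.range (n - 1), (A + (2 * (p : ℝ) + 2) * B * b * d)) /
          (∏ p ∈ Finset.range n, (A + (2 * (p : ℝ) + 1) * B * b * d)) ∧
      x (4 * (n : ℤ) - 1) =
        b * (∏ p ∈ Finset.range n, (A + (2 * (p : ℝ) + 1) * B * b * d)) /
          (∏ p ∈ Finset.range n, (A + (2 * (p : ℝ) + 2) * B * b * d)) ∧
      (∏ p ∈ Finset.range n, (A + (2 * (p : ℝ) + 1) * B * b * d)) ≠ 0 ∧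
      (∏ p ∈ Finset.range n, (A + (2 * (p : ℝ) + 2) * B * b * d)) ≠ 0) := by
    intro n hn
    induction n, hn using Nat.le_induction with
    | base =>
      have h0 := hrec 0 (by norm_num)
      norm_num [hx1, hx3] at h0
      have hwd0 := hwd 0 (by norm_num)
      norm_num [hx1, hx3] at hwd0
      have hwd2 := hwd 2 (by norm_num)
      norm_num [hx1, h0] at hwd2
      have hQ1 : A + B * b * d ≠ 0 := by
        intro h; apply hwd0; linarith
      have hP1 : A + 2 * B * b * d ≠ 0 := by
        intro h; apply hwd2
        rw [show A + B * (A * d / (A + B * b * d)) * b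
            = A * (A + 2 * B * b * d) / (A + B * b * d) by
              rw [eq_div_iff hQ1]
              linear_combination B * b * (div_mul_cancel₀ (A * d) hQ1)]
        rw [h]; simp
      have h2 := hrec 2 (by norm_num)
      norm_num [hx1, h0] at h2
      have hx3v : x 3 = b * (A + B * b * d) / (A + 2 * B * b * d) := by
        rw [h2]
        rw [show A + B * (A * d / (A + B * b * d)) * b
            = A * (A + 2 * B * b * d) / (A + B * b * d) by
              rw [eq_div_iff hQ1]
              linear_combination B * b * (div_mul_cancel₀ (A * d) hQ1)]
        field_simp
      refine ⟨?_, ?_, ?_, ?_⟩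
      · norm_num [h0]
        ring
      · rw [show (4 : ℤ) * (1 : ℕ) - 1 = 3 by norm_num]
        rw [hx3v]; norm_num
      · norm_num; intro h; apply hQ1; linarith
      · norm_num; intro h; apply hP1; linarith
    | succ m hm ih =>
      obtain ⟨k, rfl⟩ : ∃ k, m = k + 1 := ⟨m - 1, (Nat.succ_pred_eq_of_pos hm).symm⟩
      obtain ⟨hu, hv, hQ, hP⟩ := ih
      set q := ∏ p ∈ Finset.range (k + 1), (A + (2 * (p : ℝ) + 1) * B * b * d) with hqdef
      set g := A + (2 * (k : ℝ) + 2) * B * b * d with hgdef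
      set f1 := A + (2 * (k : ℝ) + 3) * B * b * d with hf1def
      set f2 := A + (2 * (k : ℝ) + 4) * B * b * d with hf2def
      set Pm := ∏ p ∈ Finset.range k, (A + (2 * (p : ℝ) + 2) * B * b * d) with hPmdef
      have hPsplit : (∏ p ∈ Finset.range (k + 1), (A + (2 * (p : ℝ) + 2) * B * b * d))
          = Pm * g := by rw [Finset.prod_range_succ]
      have hQ2 : (∏ p ∈ Finset.range (k + 1 + 1), (A + (2 * (p : ℝ) + 1) * B * b * d))
          = q * f1 := by
        rw [Finset.prod_range_succ]
        congr 1
        rw [hf1def]; push_cast; ring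
      have hP2 : (∏ p ∈ Finset.range (k + 1 + 1), (A + (2 * (p : ℝ) + 2) * B * b * d))
          = Pm * g * f2 := by
        rw [Finset.prod_range_succ, hPsplit]
        congr 1
        rw [hf2def]; push_cast; ring
      have hgf1 : f1 = g + B * b * d := by rw [hf1def, hgdef]; ring
      have hf1f2 : f2 = f1 + B * b * d := by rw [hf2def, hf1def]; ring
      rw [Nat.add_sub_cancel, ← hPmdef] at hu
      rw [hPsplit] at hv
      push_cast at hu hv
      rw [show (4 * ((k : ℤ) + 1) - 3) = 4 * k + 1 by ring] at hu
      rw [show (4 * ((k : ℤ) + 1) - 1) = 4 * k + 3 by ring] at hv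
      clear_value q g f1 f2 Pm
      clear hqdef hgdef hf1def hf2def hPmdef
      rw [hPsplit] at hP
      have hPm : Pm ≠ 0 := fun h => hP (by rw [h, zero_mul])
      have hg : g ≠ 0 := fun h => hP (by rw [h, mul_zero])
      -- denominator of the first half-step
      have hwdA := hwd (4 * k + 4) (by positivity)
      rw [show (4 * (k : ℤ) + 4 - 1) = 4 * k + 3 by ring,
        show (4 * (k : ℤ) + 4 - 3) = 4 * k + 1 by ring] at hwdA
      have hD1 : A + B * x (4 * (k : ℤ) + 3) * x (4 * (k : ℤ) + 1)
          = A * f1 / g := by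
        rw [hu, hv, hgf1]; field_simp
      have hf1 : f1 ≠ 0 := by
        intro h; apply hwdA; rw [hD1, h, mul_zero, zero_div]
      have hrecA := hrec (4 * k + 4) (by positivity)
      rw [show (4 * (k : ℤ) + 4 + 1) = 4 * k + 5 by ring,
        show (4 * (k : ℤ) + 4 - 1) = 4 * k + 3 by ring,
        show (4 * (k : ℤ) + 4 - 3) = 4 * k + 1 by ring] at hrecA
      have hu1 : x (4 * (k : ℤ) + 5) = d * A * (Pm * g) / (q * f1) := by
        rw [hrecA, hD1, hu]
        field_simp
      -- denominator of the second half-step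
      have hwdB := hwd (4 * k + 6) (by positivity)
      rw [show (4 * (k : ℤ) + 6 - 1) = 4 * k + 5 by ring,
        show (4 * (k : ℤ) + 6 - 3) = 4 * k + 3 by ring] at hwdB
      have hD2 : A + B * x (4 * (k : ℤ) + 5) * x (4 * (k : ℤ) + 3)
          = A * f2 / f1 := by
        rw [hu1, hv, hf1f2]; field_simp
      have hf2 : f2 ≠ 0 := by
        intro h; apply hwdB; rw [hD2, h, mul_zero, zero_div]
      have hrecB := hrec (4 * k + 6) (by positivity)
      rw [show (4 * (k : ℤ) + 6 + 1) = 4 * k + 7 by ring,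
        show (4 * (k : ℤ) + 6 - 1) = 4 * k + 5 by ring,
        show (4 * (k : ℤ) + 6 - 3) = 4 * k + 3 by ring] at hrecB
      have hv1 : x (4 * (k : ℤ) + 7) = b * (q * f1) / (Pm * g * f2) := by
        rw [hrecB, hD2, hv]
        field_simp
      refine ⟨?_, ?_, ?_, ?_⟩
      · rw [Nat.add_sub_cancel, hPsplit, hQ2]
        push_cast
        rw [show (4 * ((k : ℤ) + 1 + 1) - 3) = 4 * k + 5 by ring]
        exact hu1
      · rw [hQ2, hP2]
        push_cast
        rw [show (4 * ((k : ℤ) + 1 + 1) - 1) = 4 * k + 7 by ring]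
        exact hv1
      · rw [hQ2]; exact mul_ne_zero hQ hf1
      · rw [hP2]; exact mul_ne_zero hP hf2
  intro n hn
  exact ⟨(key n hn).1, (key n hn).2.1⟩
end

section
/- Assume A = α, and let (x_n)_{n≥-3} be a well-defined solution of the difference equation. Then for all integers n ≥ 1: x_{4n-2} = c·A·∏_{p=0}^{n-2}( A + (2p+2)·B·a·c ) / ∏_{p=0}^{n-1}( A + (2p+1)·B·a·c ), and x_{4n} = a·∏_{p=0}^{n-1}( A + (2p+1)·B·a·c ) / ∏_{p=0}^{n-1}( A + (2p+2)·B·a·c ). -/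
open Filter Finset

set_option maxHeartbeats 2000000 in
/-- Case `A = α`: formulas for `x_{4n-2}` and `x_{4n}`. -/
theorem stmt_5 (α A B a b c d : ℝ) (hα : α ≠ 0) (hB : B ≠ 0) (hAα : A = α)
    (ha : a ≠ 0) (hb : b ≠ 0) (hc : c ≠ 0) (hd : d ≠ 0)
    (x : ℤ → ℝ)
    (hx3 : x (-3) = d) (hx2 : x (-2) = c) (hx1 : x (-1) = b) (hx0 : x 0 = a)
    (hwd : ∀ n : ℤ, 0 ≤ n → A + B * x (n - 1) * x (n - 3) ≠ 0)
    (hrec : ∀ n : ℤ, 0 ≤ n →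
      x (n + 1) = α * x (n - 3) / (A + B * x (n - 1) * x (n - 3))) :
    ∀ n : ℕ, 1 ≤ n →
      x (4 * (n : ℤ) - 2) =
        c * A * (∏ p ∈ Finset.range (n - 1), (A + (2 * (p : ℝ) + 2) * B * a * c)) /
          (∏ p ∈ Finset.range n, (A + (2 * (p : ℝ) + 1) * B * a * c)) ∧
      x (4 * (n : ℤ)) =
        a * (∏ p ∈ Finset.range n, (A + (2 * (p : ℝ) + 1) * B * a * c)) /
          (∏ p ∈ Finset.range n, (A + (2 * (p : ℝ) + 2) * B * a * c)) := by
  subst hAα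
  suffices H : ∀ n : ℕ, 1 ≤ n →
      x (4 * (n : ℤ) - 2) =
        c * A * (∏ p ∈ Finset.range (n - 1), (A + (2 * (p : ℝ) + 2) * B * a * c)) /
          (∏ p ∈ Finset.range n, (A + (2 * (p : ℝ) + 1) * B * a * c)) ∧
      x (4 * (n : ℤ)) =
        a * (∏ p ∈ Finset.range n, (A + (2 * (p : ℝ) + 1) * B * a * c)) /
          (∏ p ∈ Finset.range n, (A + (2 * (p : ℝ) + 2) * B * a * c)) ∧
      (∏ p ∈ Finset.range n, (A + (2 * (p : ℝ) + 1) * B * a * c)) ≠ 0 ∧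
      (∏ p ∈ Finset.range n, (A + (2 * (p : ℝ) + 2) * B * a * c)) ≠ 0 by
    intro n hn
    exact ⟨(H n hn).1, (H n hn).2.1⟩
  intro n hn
  induction n, hn using Nat.le_induction with
  | base =>
      have hw1 := hwd 1 (by norm_num)
      norm_num [hx0, hx2] at hw1
      have e2 := hrec 1 (by norm_num)
      norm_num [hx0, hx2] at e2
      have hw3 := hwd 3 (by norm_num)
      norm_num [hx0, e2] at hw3
      have hkey : A + B * (A * c / (A + B * a * c)) * a = A * (A + 2*B*a*c) / (A + B*a*c) := by
        have : A + B * c * a ≠ 0 := by rwa [mul_right_comm]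
        field_simp
        ring
      have h2ne : A + 2*B*a*c ≠ 0 := by
        intro h
        apply hw3
        rw [hkey, h, mul_zero, zero_div]
      have e4 := hrec 3 (by norm_num)
      norm_num [hx0, e2] at e4
      rw [hkey] at e4
      simp only [Finset.prod_range_one, Finset.prod_range_zero, Nat.sub_self, Nat.cast_one,
        Nat.cast_zero, Nat.cast_ofNat]
      norm_num
      refine ⟨?_, ?_, ?_, ?_⟩
      · rw [e2]; ring
      · rw [e4]; field_simp [hw1, h2ne]
      · exact hw1
      · exact h2ne
  | succ n hn ih =>
      obtain ⟨m, rfl⟩ : ∃ m, n = m + 1 := ⟨n - 1, by omega⟩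
      obtain ⟨h1, h2, hP, hQ⟩ := ih
      simp only [Nat.add_sub_cancel, Finset.prod_range_succ] at h1 h2 hP hQ ⊢
      push_cast at h1 h2 hP hQ ⊢
      set Pm := ∏ p ∈ Finset.range m, (A + (2 * (p:ℝ) + 1) * B * a * c) with hPmdef
      set Qm := ∏ p ∈ Finset.range m, (A + (2 * (p:ℝ) + 2) * B * a * c) with hQmdef
      obtain ⟨hPm0, hu⟩ := mul_ne_zero_iff.mp hP
      obtain ⟨hQm0, hv⟩ := mul_ne_zero_iff.mp hQ
      rw [show (4*((m:ℤ)+1)-2) = 4*(m:ℤ)+2 from by ring] at h1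
      rw [show (4*((m:ℤ)+1)) = 4*(m:ℤ)+4 from by ring] at h2
      have hr1 := hrec (4*(m:ℤ)+5) (by omega)
      rw [show (4*(m:ℤ)+5+1) = 4*(m:ℤ)+6 from by ring,
          show (4*(m:ℤ)+5-1) = 4*(m:ℤ)+4 from by ring,
          show (4*(m:ℤ)+5-3) = 4*(m:ℤ)+2 from by ring] at hr1
      have hw1 := hwd (4*(m:ℤ)+5) (by omega)
      rw [show (4*(m:ℤ)+5-1) = 4*(m:ℤ)+4 from by ring,
          show (4*(m:ℤ)+5-3) = 4*(m:ℤ)+2 from by ring] at hw1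
      have keyD1 : A + B * x (4*(m:ℤ)+4) * x (4*(m:ℤ)+2)
          = A * (A + (2*((m:ℝ)+1)+1)*B*a*c) / (A + (2*(m:ℝ)+2)*B*a*c) := by
        rw [h1, h2]
        have key : ∀ u v : ℝ, u ≠ 0 → v ≠ 0 →
            A + B * (a * (Pm * u) / (Qm * v)) * (c * A * Qm / (Pm * u)) = A * (v + B*a*c) / v := by
          intro u v hu hv; field_simp
        rw [key _ _ hu hv]; ring
      have hr0 : (A + (2*((m:ℝ)+1)+1)*B*a*c) ≠ 0 := by
        intro h
        exact hw1 (by rw [keyD1, h, mul_zero, zero_div])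
      have x6 : x (4*(m:ℤ)+6)
          = c * A * (Qm * (A + (2*(m:ℝ)+2)*B*a*c)) /
            (Pm * (A + (2*(m:ℝ)+1)*B*a*c) * (A + (2*((m:ℝ)+1)+1)*B*a*c)) := by
        rw [hr1, keyD1, h1]
        field_simp
      have hr2 := hrec (4*(m:ℤ)+7) (by omega)
      rw [show (4*(m:ℤ)+7+1) = 4*(m:ℤ)+8 from by ring,
          show (4*(m:ℤ)+7-1) = 4*(m:ℤ)+6 from by ring,
          show (4*(m:ℤ)+7-3) = 4*(m:ℤ)+4 from by ring] at hr2
      have hw2 := hwd (4*(m:ℤ)+7) (by omega)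
      rw [show (4*(m:ℤ)+7-1) = 4*(m:ℤ)+6 from by ring,
          show (4*(m:ℤ)+7-3) = 4*(m:ℤ)+4 from by ring] at hw2
      have keyD2 : A + B * x (4*(m:ℤ)+6) * x (4*(m:ℤ)+4)
          = A * (A + (2*((m:ℝ)+1)+2)*B*a*c) / (A + (2*((m:ℝ)+1)+1)*B*a*c) := by
        rw [x6, h2]
        have key : ∀ u v r : ℝ, u ≠ 0 → v ≠ 0 → r ≠ 0 →
            A + B * (c * A * (Qm * v) / (Pm * u * r)) * (a * (Pm * u) / (Qm * v)) = A * (r + B*a*c) / r := by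
          intro u v r hu hv hr; field_simp
        rw [key _ _ _ hu hv hr0]; ring
      have hs0 : (A + (2*((m:ℝ)+1)+2)*B*a*c) ≠ 0 := by
        intro h
        exact hw2 (by rw [keyD2, h, mul_zero, zero_div])
      have x8 : x (4*(m:ℤ)+8)
          = a * (Pm * (A + (2*(m:ℝ)+1)*B*a*c) * (A + (2*((m:ℝ)+1)+1)*B*a*c)) /
            (Qm * (A + (2*(m:ℝ)+2)*B*a*c) * (A + (2*((m:ℝ)+1)+2)*B*a*c)) := by
        rw [hr2, keyD2, h2]
        field_simp
      rw [show (4*((m:ℤ)+1+1)-2) = 4*(m:ℤ)+6 from by ring,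
          show (4*((m:ℤ)+1+1)) = 4*(m:ℤ)+8 from by ring]
      exact ⟨x6, x8, mul_ne_zero hP hr0, mul_ne_zero hQ hs0⟩
end

section
/- Assume A = α, A/(B·b·d) > 0 and A/(B·a·c) > 0, and let (x_n)_{n≥-3} be a well-defined solution of the difference equation. Then for all integers n ≥ 1, writing Γ for the real Gamma function: x_{4n-3} = A·2^{2n-2}·Γ(A/(2Bbd)+n)^2·Γ(A/(Bbd)+1) / ( B·b·Γ(A/(2Bbd)+1)^2·Γ(A/(Bbd)+2n) ); x_{4n-2} = A·2^{2n-2}·Γ(A/(2Bac)+n)^2·Γ(A/(Bac)+1) / ( B·a·Γ(A/(2Bac)+1)^2·Γ(A/(Bac)+2n) ); x_{4n-1} = b·Γ(A/(Bbd)+2n+1)·Γ(A/(2Bbd)+1)^2 / ( 2^{2n}·Γ(A/(Bbd)+1)·Γ(A/(2Bbd)+n+1)^2 ); x_{4n} = a·Γ(A/(Bac)+2n+1)·Γ(A/(2Bac)+1)^2 / ( 2^{2n}·Γ(A/(Bac)+1)·Γ(A/(2Bac)+n+1)^2 ). -/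
open Filter Finset

set_option maxHeartbeats 2000000 in
/-- Case `A = α` with positivity assumptions: Gamma-function formulas for the four
subsequences of a well-defined solution. -/
theorem stmt_6 (α A B a b c d : ℝ) (hα : α ≠ 0) (hB : B ≠ 0) (hAα : A = α)
    (hpos1 : A / (B * b * d) > 0) (hpos2 : A / (B * a * c) > 0)
    (ha : a ≠ 0) (hb : b ≠ 0) (hc : c ≠ 0) (hd : d ≠ 0)
    (x : ℤ → ℝ)
    (hx3 : x (-3) = d) (hx2 : x (-2) = c) (hx1 : x (-1) = b) (hx0 : x 0 = a)
    (hwd : ∀ n : ℤ, 0 ≤ n → A + B * x (n - 1) * x (n - 3) ≠ 0)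
    (hrec : ∀ n : ℤ, 0 ≤ n →
      x (n + 1) = α * x (n - 3) / (A + B * x (n - 1) * x (n - 3))) :
    ∀ n : ℕ, 1 ≤ n →
      x (4 * (n : ℤ) - 3) =
        A * 2 ^ (2 * n - 2) * (Real.Gamma (A / (2 * B * b * d) + n)) ^ 2 *
            Real.Gamma (A / (B * b * d) + 1) /
          (B * b * (Real.Gamma (A / (2 * B * b * d) + 1)) ^ 2 *
            Real.Gamma (A / (B * b * d) + 2 * n)) ∧
      x (4 * (n : ℤ) - 2) =
        A * 2 ^ (2 * n - 2) * (Real.Gamma (A / (2 * B * a * c) + n)) ^ 2 *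
            Real.Gamma (A / (B * a * c) + 1) /
          (B * a * (Real.Gamma (A / (2 * B * a * c) + 1)) ^ 2 *
            Real.Gamma (A / (B * a * c) + 2 * n)) ∧
      x (4 * (n : ℤ) - 1) =
        b * Real.Gamma (A / (B * b * d) + 2 * n + 1) *
            (Real.Gamma (A / (2 * B * b * d) + 1)) ^ 2 /
          (2 ^ (2 * n) * Real.Gamma (A / (B * b * d) + 1) *
            (Real.Gamma (A / (2 * B * b * d) + n + 1)) ^ 2) ∧
      x (4 * (n : ℤ)) =
        a * Real.Gamma (A / (B * a * c) + 2 * n + 1) *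
            (Real.Gamma (A / (2 * B * a * c) + 1)) ^ 2 /
          (2 ^ (2 * n) * Real.Gamma (A / (B * a * c) + 1) *
            (Real.Gamma (A / (2 * B * a * c) + n + 1)) ^ 2) := by
  subst hAα
  have hBbd : B * b * d ≠ 0 := by
    intro h; rw [h, div_zero] at hpos1; exact lt_irrefl 0 hpos1
  have hBac : B * a * c ≠ 0 := by
    intro h; rw [h, div_zero] at hpos2; exact lt_irrefl 0 hpos2
  have hg1 : A / (B * b * d) = 2 * (A / (2 * B * b * d)) := by
    field_simp
  have hg2 : A / (B * a * c) = 2 * (A / (2 * B * a * c)) := by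
    field_simp
  have h1pos' : 0 < A / (2 * B * b * d) := by rw [hg1] at hpos1; linarith
  have h2pos' : 0 < A / (2 * B * a * c) := by rw [hg2] at hpos2; linarith
  rw [hg1, hg2]
  set h1 := A / (2 * B * b * d) with hh1
  set h2 := A / (2 * B * a * c) with hh2
  have h1pos : 0 < h1 := h1pos'
  have h2pos : 0 < h2 := h2pos'
  have hA1 : A = 2 * h1 * (B * b * d) := by
    rw [hh1]; field_simp
  have hA2 : A = 2 * h2 * (B * a * c) := by
    rw [hh2]; field_simp
  clear_value h1 h2
  clear hh1 hh2 hg1 hg2 hpos1 hpos2 h1pos' h2pos' hwd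
  -- key product identities
  have key : ∀ m : ℕ,
      x (2 * (m : ℤ) - 1) * x (2 * (m : ℤ) - 3) = A / (B * (2 * h1 + m)) ∧
      x (2 * (m : ℤ)) * x (2 * (m : ℤ) - 2) = A / (B * (2 * h2 + m)) := by
    intro m
    induction m with
    | zero =>
      constructor
      · norm_num [hx1, hx3]
        rw [hA1]; field_simp
      · norm_num [hx0, hx2]
        rw [hA2]; field_simp
    | succ m ih =>
      obtain ⟨ih1, ih2⟩ := ih
      have hs1 : (0:ℝ) < 2 * h1 + m := by positivity
      have hs2 : (0:ℝ) < 2 * h2 + m := by positivity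
      have hbx1 : B * x (2 * (m : ℤ) - 1) * x (2 * (m : ℤ) - 3) = A / (2 * h1 + m) := by
        rw [mul_assoc, ih1]; field_simp
      have hbx2 : B * x (2 * (m : ℤ)) * x (2 * (m : ℤ) - 2) = A / (2 * h2 + m) := by
        rw [mul_assoc, ih2]; field_simp
      have hpoly1 : B * x (2 * (m : ℤ) - 1) * x (2 * (m : ℤ) - 3) * (2 * h1 + m) = A := by
        rw [hbx1]; field_simp
      have hpoly2 : B * x (2 * (m : ℤ)) * x (2 * (m : ℤ) - 2) * (2 * h2 + m) = A := by
        rw [hbx2]; field_simp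
      have hdne1 : A + B * x (2 * (m : ℤ) - 1) * x (2 * (m : ℤ) - 3) ≠ 0 := by
        rw [hbx1]
        have h' : A + A / (2 * h1 + m) = A * (2 * h1 + m + 1) / (2 * h1 + m) := by
          field_simp
        rw [h']
        exact div_ne_zero (mul_ne_zero hα (by positivity)) hs1.ne'
      have hdne2 : A + B * x (2 * (m : ℤ)) * x (2 * (m : ℤ) - 2) ≠ 0 := by
        rw [hbx2]
        have h' : A + A / (2 * h2 + m) = A * (2 * h2 + m + 1) / (2 * h2 + m) := by
          field_simp
        rw [h']
        exact div_ne_zero (mul_ne_zero hα (by positivity)) hs2.ne'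
      constructor
      · rw [show (2 * ((m + 1 : ℕ) : ℤ) - 1) = 2 * (m : ℤ) + 1 by push_cast; ring,
            show (2 * ((m + 1 : ℕ) : ℤ) - 3) = 2 * (m : ℤ) - 1 by push_cast; ring,
            hrec (2 * m) (by positivity)]
        push_cast
        rw [div_mul_eq_mul_div, div_eq_div_iff hdne1
            (mul_ne_zero hB (by positivity))]
        linear_combination A * hpoly1
      · rw [show (2 * ((m + 1 : ℕ) : ℤ) - 2) = 2 * (m : ℤ) by push_cast; ring,
            show (2 * ((m + 1 : ℕ) : ℤ)) = (2 * (m : ℤ) + 1) + 1 by push_cast; ring,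
            hrec (2 * m + 1) (by positivity),
            show (2 * (m : ℤ) + 1 - 1) = 2 * (m : ℤ) by ring,
            show (2 * (m : ℤ) + 1 - 3) = 2 * (m : ℤ) - 2 by ring]
        push_cast
        rw [div_mul_eq_mul_div, div_eq_div_iff hdne2
            (mul_ne_zero hB (by positivity))]
        linear_combination A * hpoly2
  -- single-step relations with step 4
  have stepOdd : ∀ m : ℕ,
      x (2 * (m : ℤ) + 1) = x (2 * (m : ℤ) - 3) * ((2 * h1 + m) / (2 * h1 + m + 1)) := by
    intro m
    have hs1 : (0:ℝ) < 2 * h1 + m := by positivity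
    have hbx1 : B * x (2 * (m : ℤ) - 1) * x (2 * (m : ℤ) - 3) = A / (2 * h1 + m) := by
      rw [mul_assoc, (key m).1]; field_simp
    have hden : A + B * x (2 * (m : ℤ) - 1) * x (2 * (m : ℤ) - 3)
        = A * (2 * h1 + m + 1) / (2 * h1 + m) := by
      rw [hbx1]; field_simp
    rw [hrec (2 * m) (by positivity), hden, div_div_eq_mul_div,
        show A * x (2 * (m : ℤ) - 3) * (2 * h1 + m)
            = A * (x (2 * (m : ℤ) - 3) * (2 * h1 + m)) by ring,
        mul_div_mul_left _ _ hα, mul_div_assoc]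
  have stepEven : ∀ m : ℕ,
      x (2 * (m : ℤ) + 2) = x (2 * (m : ℤ) - 2) * ((2 * h2 + m) / (2 * h2 + m + 1)) := by
    intro m
    have hs2 : (0:ℝ) < 2 * h2 + m := by positivity
    have hbx2 : B * x (2 * (m : ℤ)) * x (2 * (m : ℤ) - 2) = A / (2 * h2 + m) := by
      rw [mul_assoc, (key m).2]; field_simp
    have hden : A + B * x (2 * (m : ℤ)) * x (2 * (m : ℤ) - 2)
        = A * (2 * h2 + m + 1) / (2 * h2 + m) := by
      rw [hbx2]; field_simp
    rw [show (2 * (m : ℤ) + 2) = (2 * (m : ℤ) + 1) + 1 by ring,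
        hrec (2 * m + 1) (by positivity),
        show (2 * (m : ℤ) + 1 - 1) = 2 * (m : ℤ) by ring,
        show (2 * (m : ℤ) + 1 - 3) = 2 * (m : ℤ) - 2 by ring,
        hden, div_div_eq_mul_div,
        show A * x (2 * (m : ℤ) - 2) * (2 * h2 + m)
            = A * (x (2 * (m : ℤ) - 2) * (2 * h2 + m)) by ring,
        mul_div_mul_left _ _ hα, mul_div_assoc]
  intro n hn
  induction n, hn using Nat.le_induction with
  | base =>
    refine ⟨?_, ?_, ?_, ?_⟩
    · rw [show (4 * ((1:ℕ) : ℤ) - 3) = 2 * ((0:ℕ) : ℤ) + 1 by norm_num, stepOdd 0,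
          show (2 * ((0:ℕ) : ℤ) - 3) = (-3 : ℤ) by norm_num, hx3]
      norm_num
      rw [show (2:ℝ) * h1 + 2 = (2 * h1 + 1) + 1 by ring,
          Real.Gamma_add_one (by positivity : (0:ℝ) < 2 * h1 + 1).ne', hA1]
      have G1 : Real.Gamma (h1 + 1) ≠ 0 := (Real.Gamma_pos_of_pos (by positivity)).ne'
      have G2 : Real.Gamma (2 * h1 + 1) ≠ 0 := (Real.Gamma_pos_of_pos (by positivity)).ne'
      field_simp
    · rw [show (4 * ((1:ℕ) : ℤ) - 2) = 2 * ((0:ℕ) : ℤ) + 2 by norm_num, stepEven 0,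
          show (2 * ((0:ℕ) : ℤ) - 2) = (-2 : ℤ) by norm_num, hx2]
      norm_num
      rw [show (2:ℝ) * h2 + 2 = (2 * h2 + 1) + 1 by ring,
          Real.Gamma_add_one (by positivity : (0:ℝ) < 2 * h2 + 1).ne', hA2]
      have G1 : Real.Gamma (h2 + 1) ≠ 0 := (Real.Gamma_pos_of_pos (by positivity)).ne'
      have G2 : Real.Gamma (2 * h2 + 1) ≠ 0 := (Real.Gamma_pos_of_pos (by positivity)).ne'
      field_simp
    · rw [show (4 * ((1:ℕ) : ℤ) - 1) = 2 * ((1:ℕ) : ℤ) + 1 by norm_num, stepOdd 1,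
          show (2 * ((1:ℕ) : ℤ) - 3) = (-1 : ℤ) by norm_num, hx1]
      norm_num
      rw [show (2:ℝ) * h1 + 2 + 1 = (2 * h1 + 1 + 1) + 1 by ring,
          Real.Gamma_add_one (by positivity : (0:ℝ) < 2 * h1 + 1 + 1).ne',
          Real.Gamma_add_one (by positivity : (0:ℝ) < 2 * h1 + 1).ne',
          Real.Gamma_add_one (by positivity : (0:ℝ) < h1 + 1).ne']
      have G1 : Real.Gamma (h1 + 1) ≠ 0 := (Real.Gamma_pos_of_pos (by positivity)).ne'
      have G2 : Real.Gamma (2 * h1 + 1) ≠ 0 := (Real.Gamma_pos_of_pos (by positivity)).ne'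
      field_simp
      ring
    · rw [show (4 * ((1:ℕ) : ℤ)) = 2 * ((1:ℕ) : ℤ) + 2 by norm_num, stepEven 1,
          show (2 * ((1:ℕ) : ℤ) - 2) = (0 : ℤ) by norm_num, hx0]
      norm_num
      rw [show (2:ℝ) * h2 + 2 + 1 = (2 * h2 + 1 + 1) + 1 by ring,
          Real.Gamma_add_one (by positivity : (0:ℝ) < 2 * h2 + 1 + 1).ne',
          Real.Gamma_add_one (by positivity : (0:ℝ) < 2 * h2 + 1).ne',
          Real.Gamma_add_one (by positivity : (0:ℝ) < h2 + 1).ne']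
      have G1 : Real.Gamma (h2 + 1) ≠ 0 := (Real.Gamma_pos_of_pos (by positivity)).ne'
      have G2 : Real.Gamma (2 * h2 + 1) ≠ 0 := (Real.Gamma_pos_of_pos (by positivity)).ne'
      field_simp
      ring
  | succ n hn ih =>
    obtain ⟨ih1, ih2, ih3, ih4⟩ := ih
    refine ⟨?_, ?_, ?_, ?_⟩
    · rw [show (4 * ((n + 1 : ℕ) : ℤ) - 3) = 2 * ((2 * n : ℕ) : ℤ) + 1 by push_cast; ring,
          stepOdd (2 * n),
          show (2 * ((2 * n : ℕ) : ℤ) - 3) = 4 * ((n : ℕ) : ℤ) - 3 by push_cast; ring,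
          ih1]
      push_cast
      have e1 : Real.Gamma (h1 + ((n:ℝ) + 1)) = (h1 + n) * Real.Gamma (h1 + n) := by
        rw [show h1 + ((n:ℝ) + 1) = (h1 + (n:ℝ)) + 1 by ring]
        exact Real.Gamma_add_one (by positivity : (0:ℝ) < h1 + (n:ℝ)).ne'
      have e2 : Real.Gamma (2 * h1 + 2 * ((n:ℝ) + 1))
          = (2 * h1 + 2 * n + 1) * ((2 * h1 + 2 * n) * Real.Gamma (2 * h1 + 2 * n)) := by
        rw [show 2 * h1 + 2 * ((n:ℝ) + 1) = (2 * h1 + 2 * (n:ℝ) + 1) + 1 by ring,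
            Real.Gamma_add_one (by positivity : (0:ℝ) < 2 * h1 + 2 * (n:ℝ) + 1).ne',
            Real.Gamma_add_one (by positivity : (0:ℝ) < 2 * h1 + 2 * (n:ℝ)).ne']
      rw [e1, e2, show 2 * (n + 1) - 2 = (2 * n - 2) + 2 by omega, pow_add]
      have G1 : Real.Gamma (h1 + 1) ≠ 0 := (Real.Gamma_pos_of_pos (by positivity)).ne'
      have G2 : Real.Gamma (2 * h1 + 2 * (n:ℝ)) ≠ 0 :=
        (Real.Gamma_pos_of_pos (by positivity)).ne'
      have s0 : (2:ℝ) * h1 + 2 * n ≠ 0 := by positivity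
      have s1 : (2:ℝ) * h1 + 2 * n + 1 ≠ 0 := by positivity
      field_simp
    · rw [show (4 * ((n + 1 : ℕ) : ℤ) - 2) = 2 * ((2 * n : ℕ) : ℤ) + 2 by push_cast; ring,
          stepEven (2 * n),
          show (2 * ((2 * n : ℕ) : ℤ) - 2) = 4 * ((n : ℕ) : ℤ) - 2 by push_cast; ring,
          ih2]
      push_cast
      have e1 : Real.Gamma (h2 + ((n:ℝ) + 1)) = (h2 + n) * Real.Gamma (h2 + n) := by
        rw [show h2 + ((n:ℝ) + 1) = (h2 + (n:ℝ)) + 1 by ring]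
        exact Real.Gamma_add_one (by positivity : (0:ℝ) < h2 + (n:ℝ)).ne'
      have e2 : Real.Gamma (2 * h2 + 2 * ((n:ℝ) + 1))
          = (2 * h2 + 2 * n + 1) * ((2 * h2 + 2 * n) * Real.Gamma (2 * h2 + 2 * n)) := by
        rw [show 2 * h2 + 2 * ((n:ℝ) + 1) = (2 * h2 + 2 * (n:ℝ) + 1) + 1 by ring,
            Real.Gamma_add_one (by positivity : (0:ℝ) < 2 * h2 + 2 * (n:ℝ) + 1).ne',
            Real.Gamma_add_one (by positivity : (0:ℝ) < 2 * h2 + 2 * (n:ℝ)).ne']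
      rw [e1, e2, show 2 * (n + 1) - 2 = (2 * n - 2) + 2 by omega, pow_add]
      have G1 : Real.Gamma (h2 + 1) ≠ 0 := (Real.Gamma_pos_of_pos (by positivity)).ne'
      have G2 : Real.Gamma (2 * h2 + 2 * (n:ℝ)) ≠ 0 :=
        (Real.Gamma_pos_of_pos (by positivity)).ne'
      have s0 : (2:ℝ) * h2 + 2 * n ≠ 0 := by positivity
      have s1 : (2:ℝ) * h2 + 2 * n + 1 ≠ 0 := by positivity
      field_simp
    · rw [show (4 * ((n + 1 : ℕ) : ℤ) - 1) = 2 * ((2 * n + 1 : ℕ) : ℤ) + 1 by push_cast; ring,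
          stepOdd (2 * n + 1),
          show (2 * ((2 * n + 1 : ℕ) : ℤ) - 3) = 4 * ((n : ℕ) : ℤ) - 1 by push_cast; ring,
          ih3]
      push_cast
      have e1 : Real.Gamma (2 * h1 + 2 * ((n:ℝ) + 1) + 1)
          = (2 * h1 + 2 * n + 2) * ((2 * h1 + 2 * n + 1) * Real.Gamma (2 * h1 + 2 * n + 1)) := by
        rw [show 2 * h1 + 2 * ((n:ℝ) + 1) + 1 = (2 * h1 + 2 * (n:ℝ) + 1 + 1) + 1 by ring,
            Real.Gamma_add_one (by positivity : (0:ℝ) < 2 * h1 + 2 * (n:ℝ) + 1 + 1).ne',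
            Real.Gamma_add_one (by positivity : (0:ℝ) < 2 * h1 + 2 * (n:ℝ) + 1).ne']
        ring
      have e2 : Real.Gamma (h1 + ((n:ℝ) + 1) + 1) = (h1 + n + 1) * Real.Gamma (h1 + n + 1) := by
        rw [show h1 + ((n:ℝ) + 1) + 1 = (h1 + (n:ℝ) + 1) + 1 by ring]
        exact Real.Gamma_add_one (by positivity : (0:ℝ) < h1 + (n:ℝ) + 1).ne'
      rw [e1, e2, show 2 * (n + 1) = 2 * n + 2 by ring, pow_add]
      have G1 : Real.Gamma (2 * h1 + 1) ≠ 0 := (Real.Gamma_pos_of_pos (by positivity)).ne'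
      have G2 : Real.Gamma (h1 + (n:ℝ) + 1) ≠ 0 :=
        (Real.Gamma_pos_of_pos (by positivity)).ne'
      have s0 : (2:ℝ) * h1 + (2 * n + 1) ≠ 0 := by positivity
      have s1 : (2:ℝ) * h1 + (2 * n + 1) + 1 ≠ 0 := by positivity
      have p0 : (2:ℝ) ^ (2 * n) ≠ 0 := by positivity
      field_simp
      ring
    · rw [show (4 * ((n + 1 : ℕ) : ℤ)) = 2 * ((2 * n + 1 : ℕ) : ℤ) + 2 by push_cast; ring,
          stepEven (2 * n + 1),
          show (2 * ((2 * n + 1 : ℕ) : ℤ) - 2) = 4 * ((n : ℕ) : ℤ) by push_cast; ring,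
          ih4]
      push_cast
      have e1 : Real.Gamma (2 * h2 + 2 * ((n:ℝ) + 1) + 1)
          = (2 * h2 + 2 * n + 2) * ((2 * h2 + 2 * n + 1) * Real.Gamma (2 * h2 + 2 * n + 1)) := by
        rw [show 2 * h2 + 2 * ((n:ℝ) + 1) + 1 = (2 * h2 + 2 * (n:ℝ) + 1 + 1) + 1 by ring,
            Real.Gamma_add_one (by positivity : (0:ℝ) < 2 * h2 + 2 * (n:ℝ) + 1 + 1).ne',
            Real.Gamma_add_one (by positivity : (0:ℝ) < 2 * h2 + 2 * (n:ℝ) + 1).ne']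
        ring
      have e2 : Real.Gamma (h2 + ((n:ℝ) + 1) + 1) = (h2 + n + 1) * Real.Gamma (h2 + n + 1) := by
        rw [show h2 + ((n:ℝ) + 1) + 1 = (h2 + (n:ℝ) + 1) + 1 by ring]
        exact Real.Gamma_add_one (by positivity : (0:ℝ) < h2 + (n:ℝ) + 1).ne'
      rw [e1, e2, show 2 * (n + 1) = 2 * n + 2 by ring, pow_add]
      have G1 : Real.Gamma (2 * h2 + 1) ≠ 0 := (Real.Gamma_pos_of_pos (by positivity)).ne'
      have G2 : Real.Gamma (h2 + (n:ℝ) + 1) ≠ 0 :=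
        (Real.Gamma_pos_of_pos (by positivity)).ne'
      have s0 : (2:ℝ) * h2 + (2 * n + 1) ≠ 0 := by positivity
      have s1 : (2:ℝ) * h2 + (2 * n + 1) + 1 ≠ 0 := by positivity
      have p0 : (2:ℝ) ^ (2 * n) ≠ 0 := by positivity
      field_simp
      ring
end

section
/- Assume |A/α| > 1, A − α + B·b·d ≠ 0 and A − α + B·a·c ≠ 0, and let (x_n)_{n≥-3} be a well-defined solution of the difference equation. Then the solution converges to zero, i.e. x_n → 0 as n → ∞. -/
open Filter Finset

/-- If `|A/α| > 1`, `A - α + B b d ≠ 0` and `A - α + B a c ≠ 0`, every well-defined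
solution converges to zero. -/
theorem stmt_7 (α A B a b c d : ℝ) (hα : α ≠ 0) (hB : B ≠ 0)
    (hratio : |A / α| > 1) (hbd : A - α + B * b * d ≠ 0) (hac : A - α + B * a * c ≠ 0)
    (ha : a ≠ 0) (hb : b ≠ 0) (hc : c ≠ 0) (hd : d ≠ 0)
    (x : ℤ → ℝ)
    (hx3 : x (-3) = d) (hx2 : x (-2) = c) (hx1 : x (-1) = b) (hx0 : x 0 = a)
    (hwd : ∀ n : ℤ, 0 ≤ n → A + B * x (n - 1) * x (n - 3) ≠ 0)
    (hrec : ∀ n : ℤ, 0 ≤ n →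
      x (n + 1) = α * x (n - 3) / (A + B * x (n - 1) * x (n - 3))) :
    Tendsto x atTop (nhds 0) := by
  have hα' : 0 < |α| := abs_pos.mpr hα
  have hAα : |α| < |A| := by
    rw [gt_iff_lt, abs_div, lt_div_iff₀ hα'] at hratio
    linarith
  have hA : A ≠ 0 := by
    intro h
    rw [h] at hAα
    simp at hAα
    exact absurd hAα (not_lt.mpr (abs_nonneg α))
  have hαA : α - A ≠ 0 := by
    intro h
    have : α = A := by linarith
    rw [this] at hAα
    exact lt_irrefl _ hAα
  -- shifted sequence
  set u : ℕ → ℝ := fun k => x ((k : ℤ) - 3) with hu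
  have hu0 : u 0 = d := by simpa [hu] using hx3
  have hu1 : u 1 = c := by simpa [hu] using hx2
  have hu2 : u 2 = b := by simpa [hu] using hx1
  have hu3 : u 3 = a := by simpa [hu] using hx0
  have e2 : ∀ k : ℕ, ((k + 2 : ℕ) : ℤ) - 3 = (k : ℤ) - 1 := by intro k; push_cast; ring
  have hu_rec : ∀ k : ℕ, u (k + 4) = α * u k / (A + B * u (k + 2) * u k) := by
    intro k
    have h := hrec (k : ℤ) (Int.natCast_nonneg k)
    have e1 : ((k + 4 : ℕ) : ℤ) - 3 = (k : ℤ) + 1 := by push_cast; ring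
    simp only [hu, e1, e2]
    exact h
  have hu_wd : ∀ k : ℕ, A + B * u (k + 2) * u k ≠ 0 := by
    intro k
    have h := hwd (k : ℤ) (Int.natCast_nonneg k)
    simp only [hu, e2]
    exact h
  have hu_ne : ∀ k, u k ≠ 0 := by
    intro k
    induction k using Nat.strong_induction_on with
    | _ k ih =>
      rcases lt_or_ge k 4 with hk | hk
      · interval_cases k
        · rw [hu0]; exact hd
        · rw [hu1]; exact hc
        · rw [hu2]; exact hb
        · rw [hu3]; exact ha
      · obtain ⟨m, rfl⟩ : ∃ m, k = m + 4 := ⟨k - 4, by omega⟩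
        rw [hu_rec m]
        exact div_ne_zero (mul_ne_zero hα (ih m (by omega))) (hu_wd m)
  -- product sequence
  set p : ℕ → ℝ := fun k => u (k + 2) * u k with hp
  have hp_ne : ∀ k, p k ≠ 0 := fun k => mul_ne_zero (hu_ne _) (hu_ne _)
  have hpwd : ∀ k, A + B * p k ≠ 0 := by
    intro k
    have := hu_wd k
    simp only [hp]
    rw [← mul_assoc]
    exact this
  have hp_rec : ∀ k, p (k + 2) = α * p k / (A + B * p k) := by
    intro k
    simp only [hp]
    rw [show k + 2 + 2 = k + 4 from rfl, hu_rec k]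
    rw [← mul_assoc]
    ring
  have hp0v : p 0 = b * d := by simp only [hp, hu2, hu0]
  have hp1v : p 1 = a * c := by simp only [hp, hu3, hu1]
  -- reciprocal and error
  set s : ℕ → ℝ := fun k => (p k)⁻¹ with hs
  set e : ℕ → ℝ := fun k => s k - B / (α - A) with he
  have he_rec : ∀ k, e (k + 2) = (A / α) * e k := by
    intro k
    simp only [he, hs, hp_rec k]
    have h1 := hp_ne k
    have h2 := hpwd k
    field_simp
    ring
  have he_pow : ∀ j m, e (j + 2 * m) = (A / α) ^ m * e j := by
    intro j m
    induction m with
    | zero => simp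
    | succ m ih =>
      have : j + 2 * (m + 1) = (j + 2 * m) + 2 := by ring
      rw [this, he_rec, ih, pow_succ]
      ring
  have he0 : e 0 ≠ 0 := by
    simp only [he, hs, hp0v]
    intro h
    apply hbd
    have hbd' : b * d ≠ 0 := mul_ne_zero hb hd
    field_simp at h
    linarith
  have he1 : e 1 ≠ 0 := by
    simp only [he, hs, hp1v]
    intro h
    apply hac
    have hac' : a * c ≠ 0 := mul_ne_zero ha hc
    field_simp at h
    linarith
  -- growth of |e|
  set c0 : ℝ := min |e 0| |e 1| with hc0def
  have hc0 : 0 < c0 := lt_min (abs_pos.mpr he0) (abs_pos.mpr he1)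
  have hR : 1 < |A / α| := hratio
  have hdiv : Tendsto (fun k : ℕ => k / 2) atTop atTop := by
    apply tendsto_atTop_atTop.mpr
    intro b
    exact ⟨2 * b, fun a ha => by omega⟩
  have hgrow : Tendsto (fun k => |e k|) atTop atTop := by
    apply tendsto_atTop_mono (f := fun k => |A / α| ^ (k / 2) * c0)
    · intro k
      have hk : e k = (A / α) ^ (k / 2) * e (k % 2) := by
        have := he_pow (k % 2) (k / 2)
        rw [show k % 2 + 2 * (k / 2) = k by omega] at this
        exact this
      rw [hk, abs_mul, abs_pow]
      apply mul_le_mul_of_nonneg_left _ (pow_nonneg (abs_nonneg _) _)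
      rcases Nat.mod_two_eq_zero_or_one k with h | h <;> rw [h]
      · exact min_le_left _ _
      · exact min_le_right _ _
    · exact ((tendsto_pow_atTop_atTop_of_one_lt hR).comp hdiv).atTop_mul_const hc0
  have hsgrow : Tendsto (fun k => |s k|) atTop atTop := by
    apply tendsto_atTop_mono (f := fun k => |e k| + -(|B / (α - A)|))
    · intro k
      have : |e k| ≤ |s k| + |B / (α - A)| := by
        calc |e k| = |s k - B / (α - A)| := rfl
        _ ≤ |s k| + |B / (α - A)| := abs_sub _ _
      linarith
    · exact tendsto_atTop_add_const_right _ _ hgrow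
  -- p tends to 0
  have hptend : Tendsto p atTop (nhds 0) := by
    apply squeeze_zero_norm (a := fun k => |s k|⁻¹)
    · intro k
      have : p k = (s k)⁻¹ := by simp only [hs, inv_inv]
      rw [Real.norm_eq_abs, this, abs_inv]
    · exact tendsto_inv_atTop_zero.comp hsgrow
  -- eventual geometric decay
  set q : ℝ := 2 * |α| / (|A| + |α|) with hqdef
  have hden : 0 < |A| + |α| := by linarith
  have hq0 : 0 < q := by positivity
  have hq1 : q < 1 := by
    rw [hqdef, div_lt_one hden]
    linarith
  have hDtend : Tendsto (fun k => |A + B * p k|) atTop (nhds |A|) := by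
    have h1 : Tendsto (fun k => A + B * p k) atTop (nhds (A + B * 0)) :=
      tendsto_const_nhds.add (tendsto_const_nhds.mul hptend)
    rw [mul_zero, add_zero] at h1
    exact h1.abs
  have hev : ∀ᶠ k in atTop, (|A| + |α|) / 2 < |A + B * p k| :=
    hDtend.eventually (eventually_gt_nhds (by linarith))
  obtain ⟨K, hK⟩ := eventually_atTop.mp hev
  have hstep : ∀ k, K ≤ k → |u (k + 4)| ≤ q * |u k| := by
    intro k hk
    have hD := hK k hk
    have hDpos : 0 < |A + B * p k| := by linarith
    rw [hu_rec k, show A + B * u (k + 2) * u k = A + B * p k by rw [hp]; ring]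
    rw [abs_div, abs_mul, div_le_iff₀ hDpos]
    have h1 : q * ((|A| + |α|) / 2) = |α| := by
      rw [hqdef]
      field_simp
    calc |α| * |u k| = q * ((|A| + |α|) / 2) * |u k| := by rw [h1]
      _ ≤ q * |u k| * |A + B * p k| := by
          nlinarith [mul_le_mul_of_nonneg_left hD.le
            (mul_nonneg hq0.le (abs_nonneg (u k)))]
  have hiter : ∀ j m, |u (K + j + 4 * m)| ≤ q ^ m * |u (K + j)| := by
    intro j m
    induction m with
    | zero => simp
    | succ m ih =>
      have heq : K + j + 4 * (m + 1) = (K + j + 4 * m) + 4 := by ring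
      rw [heq]
      calc |u ((K + j + 4 * m) + 4)| ≤ q * |u (K + j + 4 * m)| :=
            hstep _ (by omega)
        _ ≤ q * (q ^ m * |u (K + j)|) := mul_le_mul_of_nonneg_left ih hq0.le
        _ = q ^ (m + 1) * |u (K + j)| := by rw [pow_succ]; ring
  -- u tends to 0
  have hu_tend : Tendsto u atTop (nhds 0) := by
    rw [Metric.tendsto_atTop]
    intro ε hε
    set C : ℝ := max (max |u K| |u (K + 1)|) (max |u (K + 2)| |u (K + 3)|) + 1 with hCdef
    have hCge : ∀ j, j < 4 → |u (K + j)| ≤ C := by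
      intro j hj
      interval_cases j
      · simp only [Nat.add_zero]
        calc |u K| ≤ max (max |u K| |u (K + 1)|) (max |u (K + 2)| |u (K + 3)|) :=
              le_max_of_le_left (le_max_left _ _)
          _ ≤ C := by rw [hCdef]; linarith
      · calc |u (K + 1)| ≤ max (max |u K| |u (K + 1)|) (max |u (K + 2)| |u (K + 3)|) :=
              le_max_of_le_left (le_max_right _ _)
          _ ≤ C := by rw [hCdef]; linarith
      · calc |u (K + 2)| ≤ max (max |u K| |u (K + 1)|) (max |u (K + 2)| |u (K + 3)|) :=
              le_max_of_le_right (le_max_left _ _)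
          _ ≤ C := by rw [hCdef]; linarith
      · calc |u (K + 3)| ≤ max (max |u K| |u (K + 1)|) (max |u (K + 2)| |u (K + 3)|) :=
              le_max_of_le_right (le_max_right _ _)
          _ ≤ C := by rw [hCdef]; linarith
    have hC0 : 0 < C := by
      have h0 : (0:ℝ) ≤ max (max |u K| |u (K + 1)|) (max |u (K + 2)| |u (K + 3)|) :=
        le_trans (abs_nonneg _) (le_max_of_le_left (le_max_left _ _))
      rw [hCdef]; linarith
    obtain ⟨M, hM⟩ : ∃ M, q ^ M * C < ε := by
      have h1 : Tendsto (fun n : ℕ => q ^ n * C) atTop (nhds 0) := by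
        have := (tendsto_pow_atTop_nhds_zero_of_lt_one hq0.le hq1).mul_const C
        rwa [zero_mul] at this
      exact (h1.eventually (eventually_lt_nhds hε)).exists
    refine ⟨K + 4 * M + 4, fun n hn => ?_⟩
    obtain ⟨j, m, hj, hm, rfl⟩ : ∃ j m, j < 4 ∧ M ≤ m ∧ n = K + j + 4 * m := by
      refine ⟨(n - K) % 4, (n - K) / 4, Nat.mod_lt _ (by norm_num), by omega, by omega⟩
    rw [Real.dist_eq, sub_zero]
    calc |u (K + j + 4 * m)| ≤ q ^ m * |u (K + j)| := hiter j m
      _ ≤ q ^ M * C := by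
          apply mul_le_mul (pow_le_pow_of_le_one hq0.le hq1.le hm) (hCge j hj)
            (abs_nonneg _) (pow_nonneg hq0.le _)
      _ < ε := hM
  -- transfer to x
  rw [Metric.tendsto_atTop] at hu_tend ⊢
  intro ε hε
  obtain ⟨N, hN⟩ := hu_tend ε hε
  refine ⟨(N : ℤ), fun n hn => ?_⟩
  have h1 : x n = u (n + 3).toNat := by
    simp only [hu]
    congr 1
    omega
  have h2 : N ≤ (n + 3).toNat := by omega
  rw [h1]
  exact hN _ h2
end

section
/- Let (x_n)_{n≥-3} be a well-defined solution of the difference equation. If A − α + B·b·d = 0, then the subsequences (x_{4n-3})_n and (x_{4n-1})_n are constant: x_{4n-3} = d and x_{4n-1} = b for all n ≥ 0. Likewise, if A − α + B·a·c = 0, then x_{4n-2} = c and x_{4n} = a for all n ≥ 0. -/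
open Filter Finset

/-- If `A - α + B b d = 0` the subsequences `(x_{4n-3})` and `(x_{4n-1})` are constant,
and if `A - α + B a c = 0` the subsequences `(x_{4n-2})` and `(x_{4n})` are constant. -/
theorem stmt_8 (α A B a b c d : ℝ) (hα : α ≠ 0) (hB : B ≠ 0)
    (ha : a ≠ 0) (hb : b ≠ 0) (hc : c ≠ 0) (hd : d ≠ 0)
    (x : ℤ → ℝ)
    (hx3 : x (-3) = d) (hx2 : x (-2) = c) (hx1 : x (-1) = b) (hx0 : x 0 = a)
    (hwd : ∀ n : ℤ, 0 ≤ n → A + B * x (n - 1) * x (n - 3) ≠ 0)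
    (hrec : ∀ n : ℤ, 0 ≤ n →
      x (n + 1) = α * x (n - 3) / (A + B * x (n - 1) * x (n - 3))) :
    (A - α + B * b * d = 0 →
      ∀ n : ℕ, x (4 * (n : ℤ) - 3) = d ∧ x (4 * (n : ℤ) - 1) = b) ∧
    (A - α + B * a * c = 0 →
      ∀ n : ℕ, x (4 * (n : ℤ) - 2) = c ∧ x (4 * (n : ℤ)) = a) := by
  constructor
  · intro h n
    have key : A + B * b * d = α := by linarith
    induction n with
    | zero =>
      constructor
      · simpa using hx3
      · simpa using hx1
    | succ k ih =>
      obtain ⟨h3, h1⟩ := ih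
      have e1 : x (4 * (k : ℤ) + 1) = d := by
        have hr := hrec (4 * (k : ℤ)) (by positivity)
        rw [h3, h1] at hr
        rw [hr, key]
        field_simp
      have e2 : x (4 * (k : ℤ) + 3) = b := by
        have hr := hrec (4 * (k : ℤ) + 2) (by positivity)
        rw [show (4 * (k : ℤ) + 2 - 3) = 4 * k - 1 by ring,
            show (4 * (k : ℤ) + 2 - 1) = 4 * k + 1 by ring,
            show (4 * (k : ℤ) + 2 + 1) = 4 * k + 3 by ring] at hr
        rw [h1, e1] at hr
        rw [hr, show A + B * d * b = α by linarith]
        field_simp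
      constructor
      · convert e1 using 2; push_cast; ring
      · convert e2 using 2; push_cast; ring
  · intro h n
    have key : A + B * a * c = α := by linarith
    induction n with
    | zero =>
      constructor
      · simpa using hx2
      · simpa using hx0
    | succ k ih =>
      obtain ⟨h2, h0⟩ := ih
      have e1 : x (4 * (k : ℤ) + 2) = c := by
        have hr := hrec (4 * (k : ℤ) + 1) (by positivity)
        rw [show (4 * (k : ℤ) + 1 - 3) = 4 * k - 2 by ring,
            show (4 * (k : ℤ) + 1 - 1) = 4 * k by ring,
            show (4 * (k : ℤ) + 1 + 1) = 4 * k + 2 by ring] at hr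
        rw [h2, h0] at hr
        rw [hr, key]
        field_simp
      have e2 : x (4 * (k : ℤ) + 4) = a := by
        have hr := hrec (4 * (k : ℤ) + 3) (by positivity)
        rw [show (4 * (k : ℤ) + 3 - 3) = 4 * k by ring,
            show (4 * (k : ℤ) + 3 - 1) = 4 * k + 2 by ring,
            show (4 * (k : ℤ) + 3 + 1) = 4 * k + 4 by ring] at hr
        rw [h0, e1] at hr
        rw [hr, show A + B * c * a = α by linarith]
        field_simp
      constructor
      · convert e1 using 2; push_cast; ring
      · exact_mod_cast e2
end

section
/- Assume |A/α| > 1, A − α + B·b·d = 0 and A − α + B·a·c = 0, and let (x_n)_{n≥-3} be the solution of the difference equation (which is then well defined). Then for a real number l, the solution converges to l (x_n → l as n → ∞) if and only if a = b = c = d = l. -/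
open Filter Finset

/-- If `|A/α| > 1`, `A - α + B b d = 0` and `A - α + B a c = 0`, the solution is
well defined, and it converges to a real number `l` iff `a = b = c = d = l`. -/
theorem stmt_9 (α A B a b c d : ℝ) (hα : α ≠ 0) (hB : B ≠ 0)
    (hratio : |A / α| > 1) (hbd : A - α + B * b * d = 0) (hac : A - α + B * a * c = 0)
    (ha : a ≠ 0) (hb : b ≠ 0) (hc : c ≠ 0) (hd : d ≠ 0)
    (x : ℤ → ℝ)
    (hx3 : x (-3) = d) (hx2 : x (-2) = c) (hx1 : x (-1) = b) (hx0 : x 0 = a)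
    (hrec : ∀ n : ℤ, 0 ≤ n →
      x (n + 1) = α * x (n - 3) / (A + B * x (n - 1) * x (n - 3))) :
    (∀ n : ℤ, 0 ≤ n → A + B * x (n - 1) * x (n - 3) ≠ 0) ∧
    ∀ l : ℝ, Tendsto x atTop (nhds l) ↔ (a = l ∧ b = l ∧ c = l ∧ d = l) := by
  have hbd' : A + B * b * d = α := by linarith
  have hac' : A + B * a * c = α := by linarith
  have hdb' : A + B * d * b = α := by rw [show A + B * d * b = A + B * b * d from by ring]; exact hbd'
  have hca' : A + B * c * a = α := by rw [show A + B * c * a = A + B * a * c from by ring]; exact hac'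
  -- periodicity
  have hper : ∀ n : ℤ, -3 ≤ n → x n =
      if n % 4 = 0 then a else if n % 4 = 1 then d else if n % 4 = 2 then c else b := by
    have key : ∀ m : ℕ, x ((m : ℤ) - 3) =
        if ((m : ℤ) - 3) % 4 = 0 then a else if ((m : ℤ) - 3) % 4 = 1 then d
        else if ((m : ℤ) - 3) % 4 = 2 then c else b := by
      intro m
      induction m using Nat.strong_induction_on with
      | _ m ih =>
        rcases m with _ | _ | _ | _ | k
        · norm_num [hx3]
        · norm_num [hx2]
        · norm_num [hx1]
        · norm_num [hx0]
        · have h1 := ih k (by omega)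
          have h2 := ih (k + 2) (by omega)
          push_cast at h1 h2 ⊢
          have hr := hrec (k : ℤ) (Int.natCast_nonneg k)
          rw [show ((k : ℤ) + 2 - 3 : ℤ) = (k : ℤ) - 1 from by ring] at h2
          rw [show ((k : ℤ) + 1 + 1 + 1 + 1 - 3 : ℤ) = (k : ℤ) + 1 from by ring]
          have hcases : (k : ℤ) % 4 = 0 ∨ (k : ℤ) % 4 = 1 ∨ (k : ℤ) % 4 = 2 ∨ (k : ℤ) % 4 = 3 := by omega
          rcases hcases with h | h | h | h
          · have e1 : ((k : ℤ) - 3) % 4 = 1 := by omega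
            have e2 : ((k : ℤ) - 1) % 4 = 3 := by omega
            have e3 : ((k : ℤ) + 1) % 4 = 1 := by omega
            simp only [e1] at h1; simp only [e2] at h2; norm_num at h1 h2
            rw [hr, h1, h2, hbd']
            simp only [e3]; norm_num
            exact mul_div_cancel_left₀ d hα
          · have e1 : ((k : ℤ) - 3) % 4 = 2 := by omega
            have e2 : ((k : ℤ) - 1) % 4 = 0 := by omega
            have e3 : ((k : ℤ) + 1) % 4 = 2 := by omega
            simp only [e1] at h1; simp only [e2] at h2; norm_num at h1 h2
            rw [hr, h1, h2, hac']
            simp only [e3]; norm_num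
            exact mul_div_cancel_left₀ c hα
          · have e1 : ((k : ℤ) - 3) % 4 = 3 := by omega
            have e2 : ((k : ℤ) - 1) % 4 = 1 := by omega
            have e3 : ((k : ℤ) + 1) % 4 = 3 := by omega
            simp only [e1] at h1; simp only [e2] at h2; norm_num at h1 h2
            rw [hr, h1, h2, hdb']
            simp only [e3]; norm_num
            exact mul_div_cancel_left₀ b hα
          · have e1 : ((k : ℤ) - 3) % 4 = 0 := by omega
            have e2 : ((k : ℤ) - 1) % 4 = 2 := by omega
            have e3 : ((k : ℤ) + 1) % 4 = 0 := by omega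
            simp only [e1] at h1; simp only [e2] at h2; norm_num at h1 h2
            rw [hr, h1, h2, hca']
            simp only [e3]; norm_num
            exact mul_div_cancel_left₀ a hα
    intro n hn
    obtain ⟨m, rfl⟩ : ∃ m : ℕ, n = (m : ℤ) - 3 := ⟨(n + 3).toNat, by omega⟩
    exact key m
  -- denominators
  have hden : ∀ n : ℤ, 0 ≤ n → A + B * x (n - 1) * x (n - 3) ≠ 0 := by
    intro n hn
    have p1 := hper (n - 1) (by omega)
    have p3 := hper (n - 3) (by omega)
    have hcases : n % 4 = 0 ∨ n % 4 = 1 ∨ n % 4 = 2 ∨ n % 4 = 3 := by omega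
    rcases hcases with h | h | h | h
    · have e1 : (n - 1) % 4 = 3 := by omega
      have e3 : (n - 3) % 4 = 1 := by omega
      simp only [e1] at p1; simp only [e3] at p3; norm_num at p1 p3
      rw [p1, p3, hbd']; exact hα
    · have e1 : (n - 1) % 4 = 0 := by omega
      have e3 : (n - 3) % 4 = 2 := by omega
      simp only [e1] at p1; simp only [e3] at p3; norm_num at p1 p3
      rw [p1, p3, hac']; exact hα
    · have e1 : (n - 1) % 4 = 1 := by omega
      have e3 : (n - 3) % 4 = 3 := by omega
      simp only [e1] at p1; simp only [e3] at p3; norm_num at p1 p3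
      rw [p1, p3, hdb']; exact hα
    · have e1 : (n - 1) % 4 = 2 := by omega
      have e3 : (n - 3) % 4 = 0 := by omega
      simp only [e1] at p1; simp only [e3] at p3; norm_num at p1 p3
      rw [p1, p3, hca']; exact hα
  refine ⟨hden, fun l => ⟨fun hT => ?_, fun ⟨h1, h2, h3, h4⟩ => ?_⟩⟩
  · -- subsequence argument
    have hsub : ∀ j : ℤ, 0 ≤ j → Tendsto (fun k : ℤ => 4 * k + j) atTop atTop := by
      intro j hj
      apply tendsto_atTop_atTop.mpr
      intro b
      refine ⟨max b 0, fun k hk => ?_⟩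
      have h1 := le_max_left b 0
      have h2 := le_max_right b 0
      omega
    have getlim : ∀ (j : ℤ) (v : ℝ), 0 ≤ j → (∀ k : ℤ, 0 ≤ k → x (4 * k + j) = v) → v = l := by
      intro j v hj hv
      have t1 : Tendsto (fun k : ℤ => x (4 * k + j)) atTop (nhds l) := hT.comp (hsub j hj)
      have t2 : Tendsto (fun _ : ℤ => v) atTop (nhds l) :=
        t1.congr' (eventually_atTop.2 ⟨0, fun k hk => hv k hk⟩)
      exact tendsto_nhds_unique tendsto_const_nhds t2
    have va : a = l := by
      apply getlim 0 a (by norm_num)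
      intro k hk
      rw [hper (4 * k + 0) (by omega)]
      simp [show (4 * k + 0) % 4 = 0 from by omega]
    have vd : d = l := by
      apply getlim 1 d (by norm_num)
      intro k hk
      rw [hper (4 * k + 1) (by omega)]
      simp [show (4 * k + 1) % 4 = 1 from by omega]
    have vc : c = l := by
      apply getlim 2 c (by norm_num)
      intro k hk
      rw [hper (4 * k + 2) (by omega)]
      simp [show (4 * k + 2) % 4 = 2 from by omega]
    have vb : b = l := by
      apply getlim 3 b (by norm_num)
      intro k hk
      rw [hper (4 * k + 3) (by omega)]
      simp [show (4 * k + 3) % 4 = 3 from by omega]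
    exact ⟨va, vb, vc, vd⟩
  · have t1 : Tendsto (fun _ : ℤ => l) atTop (nhds l) := tendsto_const_nhds
    refine t1.congr' (eventually_atTop.2 ⟨-3, fun n hn => ?_⟩)
    rw [hper n hn]
    split_ifs <;> linarith
end

section
/- Assume A = α, and let (x_n)_{n≥-3} be a well-defined solution of the difference equation. Then the solution converges to zero, i.e. x_n → 0 as n → ∞. -/
open Filter Finset


lemma aux_pos (r s : ℝ) (hr : 0 < r) (a : ℕ → ℝ)
    (hstep : ∀ k : ℕ, a (k+1) * (s + (2*(k:ℝ)+1) * r) = a k * (s + 2*(k:ℝ) * r)) :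
    Tendsto a atTop (nhds 0) := by
  obtain ⟨K, hK⟩ : ∃ K : ℕ, |s| + r < 2 * (K:ℝ) * r := by
    obtain ⟨K, hK⟩ := exists_nat_gt ((|s| + r) / (2 * r))
    refine ⟨K, ?_⟩
    have := (div_lt_iff₀ (by positivity : (0:ℝ) < 2*r)).mp hK
    linarith
  have hvlb : ∀ k : ℕ, K ≤ k → |s| + r < 2 * (k:ℝ) * r := by
    intro k hk
    have h1 : (K:ℝ) ≤ k := Nat.cast_le.mpr hk
    nlinarith
  have hvpos : ∀ k : ℕ, K ≤ k → 0 < s + 2*(k:ℝ)*r := by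
    intro k hk
    have h1 := hvlb k hk
    have h2 := neg_abs_le s
    linarith
  have hkey : ∀ k : ℕ, K ≤ k → a (k+1)^2 * (s + 2*((k:ℝ)+1)*r) ≤ a k^2 * (s + 2*(k:ℝ)*r) := by
    intro k hk
    have h2 : a (k+1)^2 * (s + (2*(k:ℝ)+1)*r)^2 = a k^2 * (s + 2*(k:ℝ)*r)^2 := by
      rw [← mul_pow, ← mul_pow, hstep k]
    have h3 := hvpos k hk
    nlinarith [sq_nonneg (a k), sq_nonneg (a (k+1)), sq_nonneg (a k * r), mul_pos h3 hr,
      sq_nonneg (a (k+1) * r), mul_pos hr hr]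
  have hmono : ∀ m : ℕ, a (K+m)^2 * (s + 2*((K:ℝ)+m)*r) ≤ a K^2 * (s + 2*(K:ℝ)*r) := by
    intro m
    induction m with
    | zero => simp
    | succ m ih =>
      have e : K + (m+1) = (K + m) + 1 := by omega
      rw [e]
      have h1 := hkey (K+m) (Nat.le_add_right _ _)
      push_cast at h1 ih ⊢
      linarith
  have hbound : ∀ k : ℕ, K ≤ k → a k^2 * (s + 2*(k:ℝ)*r) ≤ a K^2 * (s + 2*(K:ℝ)*r) := by
    intro k hk
    obtain ⟨m, rfl⟩ := Nat.exists_eq_add_of_le hk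
    have h1 := hmono m
    push_cast at h1 ⊢
    linarith
  have hb2 : ∀ k : ℕ, K ≤ k → a k^2 ≤ (a K^2 * (s + 2*(K:ℝ)*r)) / (2*(k:ℝ)*r - |s|) := by
    intro k hk
    have h1 := hbound k hk
    have h2 : 0 < 2*(k:ℝ)*r - |s| := by have := hvlb k hk; linarith
    rw [le_div_iff₀ h2]
    have h3 := neg_abs_le s
    nlinarith [sq_nonneg (a k)]
  have hbt : Tendsto (fun k : ℕ => (a K^2 * (s + 2*(K:ℝ)*r)) / (2*(k:ℝ)*r - |s|)) atTop (nhds 0) := by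
    have h1 : Tendsto (fun k : ℕ => 2*(k:ℝ)*r - |s|) atTop atTop := by
      have h2 := (tendsto_natCast_atTop_atTop (R := ℝ)).atTop_mul_const
        (by positivity : (0:ℝ) < 2*r)
      have h3 := tendsto_atTop_add_const_right atTop (-|s|) h2
      exact h3.congr (fun k => by ring)
    simpa [div_eq_mul_inv] using h1.inv_tendsto_atTop.const_mul (a K^2 * (s + 2*(K:ℝ)*r))
  have hsq0 : Tendsto (fun k : ℕ => a k ^ 2) atTop (nhds 0) := by
    refine squeeze_zero' (Eventually.of_forall fun k => sq_nonneg _) ?_ hbt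
    filter_upwards [eventually_ge_atTop K] with k hk using hb2 k hk
  have habs : Tendsto (fun k : ℕ => |a k|) atTop (nhds 0) := by
    have h1 : Tendsto (fun k : ℕ => Real.sqrt (a k ^ 2)) atTop (nhds (Real.sqrt 0)) :=
      (Real.continuous_sqrt.tendsto 0).comp hsq0
    simpa [Real.sqrt_sq_eq_abs] using h1
  have hneg : Tendsto (fun k : ℕ => -|a k|) atTop (nhds 0) := by simpa using habs.neg
  exact tendsto_of_tendsto_of_tendsto_of_le_of_le hneg habs
    (fun k => neg_abs_le _) (fun k => le_abs_self _)

lemma aux_conv (r s : ℝ) (hr : r ≠ 0) (a : ℕ → ℝ)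
    (hstep : ∀ k : ℕ, a (k+1) * (s + (2*(k:ℝ)+1) * r) = a k * (s + 2*(k:ℝ) * r)) :
    Tendsto a atTop (nhds 0) := by
  rcases hr.lt_or_gt with h | h
  · refine aux_pos (-r) (-s) (by linarith) a (fun k => ?_)
    have h0 := hstep k
    ring_nf at h0 ⊢
    linarith
  · exact aux_pos r s h a hstep

/-- If `A = α`, every well-defined solution converges to zero. -/
theorem stmt_10 (α A B a b c d : ℝ) (hα : α ≠ 0) (hB : B ≠ 0) (hAα : A = α)
    (ha : a ≠ 0) (hb : b ≠ 0) (hc : c ≠ 0) (hd : d ≠ 0)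
    (x : ℤ → ℝ)
    (hx3 : x (-3) = d) (hx2 : x (-2) = c) (hx1 : x (-1) = b) (hx0 : x 0 = a)
    (hwd : ∀ n : ℤ, 0 ≤ n → A + B * x (n - 1) * x (n - 3) ≠ 0)
    (hrec : ∀ n : ℤ, 0 ≤ n →
      x (n + 1) = α * x (n - 3) / (A + B * x (n - 1) * x (n - 3))) :
    Tendsto x atTop (nhds 0) := by
  rw [hAα] at hwd hrec
  have hr : B / α ≠ 0 := div_ne_zero hB hα
  -- Step A: x n ≠ 0 for all n ≥ -3
  have hxk : ∀ k : ℕ, x ((k : ℤ) - 3) ≠ 0 := by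
    intro k
    induction k using Nat.strong_induction_on with
    | _ k ih =>
      match k with
      | 0 => simpa using hx3 ▸ hd
      | 1 => rw [show ((1:ℕ):ℤ) - 3 = -2 by norm_num, hx2]; exact hc
      | 2 => rw [show ((2:ℕ):ℤ) - 3 = -1 by norm_num, hx1]; exact hb
      | 3 => rw [show ((3:ℕ):ℤ) - 3 = 0 by norm_num, hx0]; exact ha
      | (m+4) =>
        have hm : (0:ℤ) ≤ (m:ℤ) := Int.ofNat_nonneg m
        have h1 : ((m+4 : ℕ) : ℤ) - 3 = (m : ℤ) + 1 := by push_cast; ring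
        rw [h1, hrec m hm]
        exact div_ne_zero (mul_ne_zero hα (ih m (by omega))) (hwd m hm)
  have hxne : ∀ n : ℤ, -3 ≤ n → x n ≠ 0 := by
    intro n hn
    have := hxk (n + 3).toNat
    rwa [show (((n+3).toNat : ℕ) : ℤ) - 3 = n by omega] at this
  -- Step B: the auxiliary product t n = x (n-1) * x (n-3)
  have htne : ∀ n : ℤ, 0 ≤ n → x (n-1) * x (n-3) ≠ 0 := fun n hn =>
    mul_ne_zero (hxne (n-1) (by omega)) (hxne (n-3) (by omega))
  have hT : ∀ n : ℤ, 0 ≤ n →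
      x (n+2-1) * x (n+2-3) = α * (x (n-1) * x (n-3)) / (α + B * (x (n-1) * x (n-3))) := by
    intro n hn
    have hden' : α + B * (x (n-1) * x (n-3)) ≠ 0 := by
      have := hwd n hn; rwa [mul_assoc] at this
    rw [show n+2-1 = n+1 by ring, show n+2-3 = n-1 by ring, hrec n hn, mul_assoc]
    rw [div_mul_eq_mul_div]
    congr 1
    ring
  have hTinv : ∀ n : ℤ, 0 ≤ n →
      1 / (x (n+2-1) * x (n+2-3)) = 1 / (x (n-1) * x (n-3)) + B / α := by
    intro n hn
    have h0 := htne n hn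
    have hden' : α + B * (x (n-1) * x (n-3)) ≠ 0 := by
      have := hwd n hn; rwa [mul_assoc] at this
    rw [hT n hn, one_div_div]
    rw [div_add_div _ _ h0 hα, div_eq_div_iff (mul_ne_zero hα h0) (mul_ne_zero h0 hα)]
    ring
  have hV : ∀ n : ℤ, 0 ≤ n → ∀ k : ℕ,
      1 / (x (n + 2*k - 1) * x (n + 2*k - 3)) = 1 / (x (n-1) * x (n-3)) + k * (B/α) := by
    intro n hn k
    induction k with
    | zero => norm_num
    | succ k ih =>
      have e1 : n + 2*((k:ℤ)+1) - 1 = (n + 2*k) + 2 - 1 := by ring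
      have e2 : n + 2*((k:ℤ)+1) - 3 = (n + 2*k) + 2 - 3 := by ring
      push_cast
      rw [e1, e2, hTinv (n + 2*(k:ℤ)) (by omega)]
      push_cast at ih
      rw [ih]; ring
  -- Step C: convergence along each residue class mod 4
  have key : ∀ j : ℤ, 0 ≤ j → Tendsto (fun k : ℕ => x (j + 4 * k)) atTop (nhds 0) := by
    intro j hj
    have hstep : ∀ k : ℕ, x (j + 4*((k:ℤ)+1)) *
        (1 / (x (j+3-1) * x (j+3-3)) + (2*(k:ℝ)+1) * (B/α)) =
        x (j + 4*(k:ℤ)) * (1 / (x (j+3-1) * x (j+3-3)) + 2*(k:ℝ) * (B/α)) := by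
      intro k
      have hn : (0:ℤ) ≤ j + 4*(k:ℤ) + 3 := by omega
      have hT0 : x (j + 4*(k:ℤ) + 3 - 1) * x (j + 4*(k:ℤ) + 3 - 3) ≠ 0 := htne _ (by omega)
      have hv2a := hV (j+3) (by omega) (2*k)
      rw [show (j:ℤ) + 3 + 2*((2*k:ℕ):ℤ) - 1 = j + 4*(k:ℤ) + 3 - 1 by push_cast; ring,
          show (j:ℤ) + 3 + 2*((2*k:ℕ):ℤ) - 3 = j + 4*(k:ℤ) + 3 - 3 by push_cast; ring] at hv2a
      push_cast at hv2a
      -- hv2a : 1 / (x (j+4k+3-1) * x (j+4k+3-3)) = 1 / (x (j+3-1)*x (j+3-3)) + 2k * (B/α)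
      have h1 := hrec (j + 4*(k:ℤ) + 3) hn
      rw [show (j:ℤ) + 4*(k:ℤ) + 3 + 1 = j + 4*((k:ℤ)+1) by ring] at h1
      have hden' : α + B * x (j + 4*(k:ℤ) + 3 - 1) * x (j + 4*(k:ℤ) + 3 - 3) ≠ 0 :=
        hwd _ hn
      rw [show 1 / (x (j+3-1) * x (j+3-3)) + (2*(k:ℝ)+1) * (B/α)
          = (1 / (x (j+3-1) * x (j+3-3)) + 2*(k:ℝ) * (B/α)) + B/α by ring,
        ← hv2a, h1,
        show (j:ℤ) + 4*(k:ℤ) + 3 - 3 = j + 4*(k:ℤ) by ring]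
      rw [show (j:ℤ) + 4*(k:ℤ) + 3 - 3 = j + 4*(k:ℤ) by ring] at hT0 hden'
      have hxa : x (j + 4*(k:ℤ) + 3 - 1) ≠ 0 := hxne _ (by omega)
      have hxb : x (j + 4*(k:ℤ)) ≠ 0 := hxne _ (by omega)
      field_simp
      exact div_self (by intro h; apply hden'; linarith)
    exact aux_conv (B/α) (1 / (x (j+3-1) * x (j+3-3))) hr (fun k : ℕ => x (j + 4*(k:ℤ))) hstep
  -- combine the four residue classes
  rw [Metric.tendsto_atTop]
  intro ε hε
  obtain ⟨K0, hK0⟩ := Metric.tendsto_atTop.mp (key 0 (by norm_num)) ε hε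
  obtain ⟨K1, hK1⟩ := Metric.tendsto_atTop.mp (key 1 (by norm_num)) ε hε
  obtain ⟨K2, hK2⟩ := Metric.tendsto_atTop.mp (key 2 (by norm_num)) ε hε
  obtain ⟨K3, hK3⟩ := Metric.tendsto_atTop.mp (key 3 (by norm_num)) ε hε
  set M : ℕ := max (max K0 K1) (max K2 K3) with hM
  refine ⟨4 * (M : ℤ) + 3, fun n hn => ?_⟩
  have hn0 : (0:ℤ) ≤ n := by omega
  have hq : (0:ℤ) ≤ n / 4 := Int.ediv_nonneg hn0 (by norm_num)
  have hdecomp : n = n % 4 + 4 * (n / 4) := by omega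
  have hkq : (((n/4).toNat : ℕ) : ℤ) = n / 4 := Int.toNat_of_nonneg hq
  have hqM : (M : ℤ) ≤ n / 4 := by omega
  have hkM : M ≤ (n/4).toNat := by omega
  have hj4 : n % 4 = 0 ∨ n % 4 = 1 ∨ n % 4 = 2 ∨ n % 4 = 3 := by omega
  rcases hj4 with h | h | h | h
  · have := hK0 (n/4).toNat (by omega)
    rwa [show (0:ℤ) + 4 * (((n/4).toNat : ℕ) : ℤ) = n by omega] at this
  · have := hK1 (n/4).toNat (by omega)
    rwa [show (1:ℤ) + 4 * (((n/4).toNat : ℕ) : ℤ) = n by omega] at this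
  · have := hK2 (n/4).toNat (by omega)
    rwa [show (2:ℤ) + 4 * (((n/4).toNat : ℕ) : ℤ) = n by omega] at this
  · have := hK3 (n/4).toNat (by omega)
    rwa [show (3:ℤ) + 4 * (((n/4).toNat : ℕ) : ℤ) = n by omega] at this
end

section
/- Assume A = −α, and let (x_n)_{n≥-3} be a well-defined solution of the difference equation (in particular A + B·b·d ≠ 0 and A + B·a·c ≠ 0). Then for all integers n ≥ 0: x_{4n-3} = d·( −A/(A + B·b·d) )^n, x_{4n-1} = b·( −(A + B·b·d)/A )^n, x_{4n-2} = c·( −A/(A + B·a·c) )^n, and x_{4n} = a·( −(A + B·a·c)/A )^n. -/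
open Filter Finset

/-- Case `A = -α`: explicit geometric formulas for the four subsequences. -/
theorem stmt_11 (α A B a b c d : ℝ) (hα : α ≠ 0) (hB : B ≠ 0) (hAα : A = -α)
    (ha : a ≠ 0) (hb : b ≠ 0) (hc : c ≠ 0) (hd : d ≠ 0)
    (x : ℤ → ℝ)
    (hx3 : x (-3) = d) (hx2 : x (-2) = c) (hx1 : x (-1) = b) (hx0 : x 0 = a)
    (hwd : ∀ n : ℤ, 0 ≤ n → A + B * x (n - 1) * x (n - 3) ≠ 0)
    (hrec : ∀ n : ℤ, 0 ≤ n →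
      x (n + 1) = α * x (n - 3) / (A + B * x (n - 1) * x (n - 3))) :
    ∀ n : ℕ,
      x (4 * (n : ℤ) - 3) = d * (-A / (A + B * b * d)) ^ n ∧
      x (4 * (n : ℤ) - 1) = b * (-(A + B * b * d) / A) ^ n ∧
      x (4 * (n : ℤ) - 2) = c * (-A / (A + B * a * c)) ^ n ∧
      x (4 * (n : ℤ)) = a * (-(A + B * a * c) / A) ^ n := by
  have hA : A ≠ 0 := by rw [hAα]; exact neg_ne_zero.mpr hα
  have hbd : A + B * b * d ≠ 0 := by
    have w := hwd 0 le_rfl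
    simp only [show (0:ℤ)-1 = -1 from by ring, show (0:ℤ)-3 = -3 from by ring,
      hx1, hx3] at w
    exact w
  have hac : A + B * a * c ≠ 0 := by
    have w := hwd 1 (by norm_num)
    simp only [show (1:ℤ)-1 = 0 from by ring, show (1:ℤ)-3 = -2 from by ring,
      hx0, hx2] at w
    exact w
  have hαA : α = -A := by rw [hAα]; ring
  have hrs : (-A / (A + B * b * d)) * (-(A + B * b * d) / A) = 1 := by
    field_simp
  have hpq : (-A / (A + B * a * c)) * (-(A + B * a * c) / A) = 1 := by
    field_simp
  have hXbd : A + B * b * d * (-A / (A + B * b * d)) = A ^ 2 / (A + B * b * d) := by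
    field_simp; ring
  have hXac : A + B * a * c * (-A / (A + B * a * c)) = A ^ 2 / (A + B * a * c) := by
    field_simp; ring
  have hkbd : -A / (A ^ 2 / (A + B * b * d)) = -(A + B * b * d) / A := by
    rw [div_div_eq_mul_div]; field_simp
  have hkac : -A / (A ^ 2 / (A + B * a * c)) = -(A + B * a * c) / A := by
    rw [div_div_eq_mul_div]; field_simp
  intro n
  induction n with
  | zero => simp [hx3, hx2, hx1, hx0]
  | succ n ih =>
    obtain ⟨h1, h2, h3, h4⟩ := ih
    have hrsn : (-A / (A + B * b * d)) ^ n * (-(A + B * b * d) / A) ^ n = 1 := by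
      rw [← mul_pow, hrs, one_pow]
    have hpqn : (-A / (A + B * a * c)) ^ n * (-(A + B * a * c) / A) ^ n = 1 := by
      rw [← mul_pow, hpq, one_pow]
    -- x(4n+1)
    have e1 : x (4 * (n:ℤ) + 1) = d * (-A / (A + B * b * d)) ^ (n + 1) := by
      have h := hrec (4 * (n:ℤ)) (by positivity)
      rw [h1, h2, hαA] at h
      rw [h, show A + B * (b * (-(A + B * b * d) / A) ^ n) * (d * (-A / (A + B * b * d)) ^ n)
            = A + B * b * d * ((-A / (A + B * b * d)) ^ n * (-(A + B * b * d) / A) ^ n)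
          from by ring, hrsn, mul_one, pow_succ]
      ring
    -- x(4n+2)
    have e2 : x (4 * (n:ℤ) + 2) = c * (-A / (A + B * a * c)) ^ (n + 1) := by
      have h := hrec (4 * (n:ℤ) + 1) (by positivity)
      rw [show 4 * (n:ℤ) + 1 + 1 = 4 * (n:ℤ) + 2 from by ring,
          show 4 * (n:ℤ) + 1 - 3 = 4 * (n:ℤ) - 2 from by ring,
          show 4 * (n:ℤ) + 1 - 1 = 4 * (n:ℤ) from by ring] at h
      rw [h3, h4, hαA] at h
      rw [h, show A + B * (a * (-(A + B * a * c) / A) ^ n) * (c * (-A / (A + B * a * c)) ^ n)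
            = A + B * a * c * ((-A / (A + B * a * c)) ^ n * (-(A + B * a * c) / A) ^ n)
          from by ring, hpqn, mul_one, pow_succ]
      ring
    -- x(4n+3)
    have e3 : x (4 * (n:ℤ) + 3) = b * (-(A + B * b * d) / A) ^ (n + 1) := by
      have h := hrec (4 * (n:ℤ) + 2) (by positivity)
      rw [show 4 * (n:ℤ) + 2 + 1 = 4 * (n:ℤ) + 3 from by ring,
          show 4 * (n:ℤ) + 2 - 3 = 4 * (n:ℤ) - 1 from by ring,
          show 4 * (n:ℤ) + 2 - 1 = 4 * (n:ℤ) + 1 from by ring] at h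
      rw [h2, e1, hαA] at h
      rw [h, show A + B * (d * (-A / (A + B * b * d)) ^ (n + 1))
                * (b * (-(A + B * b * d) / A) ^ n)
            = A + B * b * d * (-A / (A + B * b * d))
                * ((-A / (A + B * b * d)) ^ n * (-(A + B * b * d) / A) ^ n)
          from by ring, hrsn, mul_one, hXbd,
          show -A * (b * (-(A + B * b * d) / A) ^ n) / (A ^ 2 / (A + B * b * d))
            = b * (-(A + B * b * d) / A) ^ n * (-A / (A ^ 2 / (A + B * b * d)))
          from by ring, hkbd, pow_succ]
      ring
    -- x(4n+4)
    have e4 : x (4 * (n:ℤ) + 4) = a * (-(A + B * a * c) / A) ^ (n + 1) := by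
      have h := hrec (4 * (n:ℤ) + 3) (by positivity)
      rw [show 4 * (n:ℤ) + 3 + 1 = 4 * (n:ℤ) + 4 from by ring,
          show 4 * (n:ℤ) + 3 - 3 = 4 * (n:ℤ) from by ring,
          show 4 * (n:ℤ) + 3 - 1 = 4 * (n:ℤ) + 2 from by ring] at h
      rw [h4, e2, hαA] at h
      rw [h, show A + B * (c * (-A / (A + B * a * c)) ^ (n + 1))
                * (a * (-(A + B * a * c) / A) ^ n)
            = A + B * a * c * (-A / (A + B * a * c))
                * ((-A / (A + B * a * c)) ^ n * (-(A + B * a * c) / A) ^ n)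
          from by ring, hpqn, mul_one, hXac,
          show -A * (a * (-(A + B * a * c) / A) ^ n) / (A ^ 2 / (A + B * a * c))
            = a * (-(A + B * a * c) / A) ^ n * (-A / (A ^ 2 / (A + B * a * c)))
          from by ring, hkac, pow_succ]
      ring
    refine ⟨?_, ?_, ?_, ?_⟩
    · rw [show 4 * (((n:ℕ)+1 : ℕ) : ℤ) - 3 = 4 * (n:ℤ) + 1 from by push_cast; ring]
      exact e1
    · rw [show 4 * (((n:ℕ)+1 : ℕ) : ℤ) - 1 = 4 * (n:ℤ) + 3 from by push_cast; ring]
      exact e3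
    · rw [show 4 * (((n:ℕ)+1 : ℕ) : ℤ) - 2 = 4 * (n:ℤ) + 2 from by push_cast; ring]
      exact e2
    · rw [show (4 * (((n:ℕ)+1 : ℕ) : ℤ)) = 4 * (n:ℤ) + 4 from by push_cast; ring]
      exact e4
end

section
/- Assume A = −α and |A + B·b·d| ≠ |A|, and let (x_n)_{n≥-3} be a well-defined solution of the difference equation. Then the solution is unbounded: for every M > 0 there exists n with |x_n| > M. More precisely, if |A + B·b·d| < |A| then |x_{4n-3}| → ∞, and if |A + B·b·d| > |A| then |x_{4n-1}| → ∞, as n → ∞. -/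
open Filter Finset

/-- Case `A = -α` with `|A + B b d| ≠ |A|`: every well-defined solution is unbounded;
more precisely `|x_{4n-3}| → ∞` when `|A + B b d| < |A|` and `|x_{4n-1}| → ∞` when
`|A + B b d| > |A|`. -/
theorem stmt_12 (α A B a b c d : ℝ) (hα : α ≠ 0) (hB : B ≠ 0) (hAα : A = -α)
    (hne : |A + B * b * d| ≠ |A|)
    (ha : a ≠ 0) (hb : b ≠ 0) (hc : c ≠ 0) (hd : d ≠ 0)
    (x : ℤ → ℝ)
    (hx3 : x (-3) = d) (hx2 : x (-2) = c) (hx1 : x (-1) = b) (hx0 : x 0 = a)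
    (hwd : ∀ n : ℤ, 0 ≤ n → A + B * x (n - 1) * x (n - 3) ≠ 0)
    (hrec : ∀ n : ℤ, 0 ≤ n →
      x (n + 1) = α * x (n - 3) / (A + B * x (n - 1) * x (n - 3))) :
    (∀ M : ℝ, M > 0 → ∃ n : ℤ, -3 ≤ n ∧ |x n| > M) ∧
    (|A + B * b * d| < |A| →
      Tendsto (fun n : ℕ => |x (4 * (n : ℤ) - 3)|) atTop atTop) ∧
    (|A + B * b * d| > |A| →
      Tendsto (fun n : ℕ => |x (4 * (n : ℤ) - 1)|) atTop atTop) := by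
  have hA : A ≠ 0 := by rw [hAα]; simpa using hα
  have hT0 : A + B * x (0 - 1) * x (0 - 3) = A + B * b * d := by
    norm_num [hx1, hx3]
  have ht0 : A + B * b * d ≠ 0 := hT0 ▸ hwd 0 le_rfl
  -- key step: t_{n+2} = α² / t_n
  have hstep : ∀ n : ℤ, 0 ≤ n →
      A + B * x (n + 2 - 1) * x (n + 2 - 3) =
        α ^ 2 / (A + B * x (n - 1) * x (n - 3)) := by
    intro n hn
    have h1 := hrec n hn
    have h2 := hwd n hn
    have e1 : n + 2 - 1 = n + 1 := by ring
    have e2 : n + 2 - 3 = n - 1 := by ring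
    rw [e1, e2, h1]
    rw [hAα] at h2 ⊢
    have key : B * (α * x (n - 3) / (-α + B * x (n - 1) * x (n - 3))) * x (n - 1)
        = α * (B * x (n - 1) * x (n - 3)) / (-α + B * x (n - 1) * x (n - 3)) := by ring
    rw [key, eq_div_iff h2, add_mul, div_mul_cancel₀ _ h2]
    ring
  -- period 4
  have hper : ∀ k : ℕ, A + B * x (4 * (k : ℤ) - 1) * x (4 * (k : ℤ) - 3)
      = A + B * b * d := by
    intro k
    induction k with
    | zero => simpa using hT0
    | succ k ih =>
      have hk : (0:ℤ) ≤ 4 * (k : ℤ) := by positivity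
      have h2 := hstep (4 * (k : ℤ)) hk
      have h4 := hstep (4 * (k : ℤ) + 2) (by positivity)
      push_cast
      have e1 : (4 * ((k:ℤ) + 1) - 1) = 4 * (k:ℤ) + 2 + 2 - 1 := by ring
      have e2 : (4 * ((k:ℤ) + 1) - 3) = 4 * (k:ℤ) + 2 + 2 - 3 := by ring
      rw [e1, e2, h4]
      have e3 : (4 * (k:ℤ) + 2 - 1) = 4 * (k:ℤ) + 2 - 1 := rfl
      rw [h2, ih]
      field_simp
  -- subsequence formulas
  have hodd1 : ∀ k : ℕ, x (4 * (k : ℤ) - 3) = (α / (A + B * b * d)) ^ k * d := by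
    intro k
    induction k with
    | zero => simpa using hx3
    | succ k ih =>
      have hk : (0:ℤ) ≤ 4 * (k : ℤ) := by positivity
      have h1 := hrec (4 * (k : ℤ)) hk
      push_cast
      have e : (4 * ((k:ℤ) + 1) - 3) = 4 * (k:ℤ) + 1 := by ring
      rw [e, h1, hper k, ih, pow_succ]
      ring
  have hodd2 : ∀ k : ℕ, x (4 * (k : ℤ) - 1) = ((A + B * b * d) / α) ^ k * b := by
    intro k
    induction k with
    | zero => simpa using hx1
    | succ k ih =>
      have hk : (0:ℤ) ≤ 4 * (k : ℤ) := by positivity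
      have h1 := hrec (4 * (k : ℤ) + 2) (by positivity)
      have h2 := hstep (4 * (k : ℤ)) hk
      push_cast
      have e : (4 * ((k:ℤ) + 1) - 1) = 4 * (k:ℤ) + 2 + 1 := by ring
      have e2 : (4 * (k:ℤ) + 2 - 3) = 4 * (k:ℤ) - 1 := by ring
      have e3 : (4 * (k:ℤ) + 2 - 1) = 4 * (k:ℤ) + 1 := by ring
      rw [e, h1]
      rw [e2] at h1 ⊢
      have h2' : A + B * x (4 * (k:ℤ) + 2 - 1) * x (4 * (k:ℤ) + 2 - 3)
          = α ^ 2 / (A + B * b * d) := by rw [h2, hper k]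
      rw [e2] at h2'
      rw [h2', ih, pow_succ]
      field_simp
      rw [pow_succ]
      field_simp
  have habs : |α| = |A| := by rw [hAα, abs_neg]
  have hta : |A + B * b * d| > 0 := abs_pos.2 ht0
  -- the two tendsto statements
  have htend1 : |A + B * b * d| < |A| →
      Tendsto (fun n : ℕ => |x (4 * (n : ℤ) - 3)|) atTop atTop := by
    intro hlt
    have hr : 1 < |α / (A + B * b * d)| := by
      rw [abs_div, habs]
      exact (one_lt_div hta).2 hlt
    have := (tendsto_pow_atTop_atTop_of_one_lt hr).atTop_mul_const (abs_pos.2 hd)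
    refine this.congr fun n => ?_
    rw [hodd1 n, abs_mul, abs_pow]
  have htend2 : |A + B * b * d| > |A| →
      Tendsto (fun n : ℕ => |x (4 * (n : ℤ) - 1)|) atTop atTop := by
    intro hlt
    have hr : 1 < |(A + B * b * d) / α| := by
      rw [abs_div, habs]
      exact (one_lt_div (habs ▸ abs_pos.2 hα)).2 hlt
    have := (tendsto_pow_atTop_atTop_of_one_lt hr).atTop_mul_const (abs_pos.2 hb)
    refine this.congr fun n => ?_
    rw [hodd2 n, abs_mul, abs_pow]
  refine ⟨?_, htend1, htend2⟩
  intro M hM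
  rcases hne.lt_or_gt with hlt | hlt
  · obtain ⟨n, hn⟩ := ((htend1 hlt).eventually_gt_atTop M).exists
    exact ⟨4 * (n : ℤ) - 3, by omega, hn⟩
  · obtain ⟨n, hn⟩ := ((htend2 hlt).eventually_gt_atTop M).exists
    exact ⟨4 * (n : ℤ) - 1, by omega, hn⟩
end

section
/- Assume A = −α, and let (x_n)_{n≥-3} be a well-defined solution of the difference equation. Then exactly one of the subsequences (x_{4n-3})_n, (x_{4n-1})_n tends in absolute value to ∞ or both converge; specifically, if |A + B·b·d| < |A| then x_{4n-1} → 0 and |x_{4n-3}| → ∞, while if |A + B·b·d| > |A| then x_{4n-3} → 0 and |x_{4n-1}| → ∞, as n → ∞. -/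
open Filter Finset

/-- Case `A = -α`: if `|A + B b d| < |A|` then `x_{4n-1} → 0` and `|x_{4n-3}| → ∞`;
if `|A + B b d| > |A|` then `x_{4n-3} → 0` and `|x_{4n-1}| → ∞`. -/
theorem stmt_13 (α A B a b c d : ℝ) (hα : α ≠ 0) (hB : B ≠ 0) (hAα : A = -α)
    (ha : a ≠ 0) (hb : b ≠ 0) (hc : c ≠ 0) (hd : d ≠ 0)
    (x : ℤ → ℝ)
    (hx3 : x (-3) = d) (hx2 : x (-2) = c) (hx1 : x (-1) = b) (hx0 : x 0 = a)
    (hwd : ∀ n : ℤ, 0 ≤ n → A + B * x (n - 1) * x (n - 3) ≠ 0)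
    (hrec : ∀ n : ℤ, 0 ≤ n →
      x (n + 1) = α * x (n - 3) / (A + B * x (n - 1) * x (n - 3))) :
    (|A + B * b * d| < |A| →
      Tendsto (fun n : ℕ => x (4 * (n : ℤ) - 1)) atTop (nhds 0) ∧
      Tendsto (fun n : ℕ => |x (4 * (n : ℤ) - 3)|) atTop atTop) ∧
    (|A + B * b * d| > |A| →
      Tendsto (fun n : ℕ => x (4 * (n : ℤ) - 3)) atTop (nhds 0) ∧
      Tendsto (fun n : ℕ => |x (4 * (n : ℤ) - 1)|) atTop atTop) := by
  have hA : A ≠ 0 := by rw [hAα]; simpa using hα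
  have hD : A + B * b * d ≠ 0 := by
    have h0 := hwd 0 le_rfl
    rw [show (0:ℤ) - 1 = -1 by ring, show (0:ℤ) - 3 = -3 by ring, hx1, hx3] at h0
    exact h0
  set r0 : ℝ := α / (A + B * b * d) with hr0def
  set r1 : ℝ := α * (A + B * b * d) / A ^ 2 with hr1def
  have hr : r0 * r1 = 1 := by
    have hD' : -α + B * b * d ≠ 0 := by rw [← hAα]; exact hD
    rw [hr0def, hr1def, hAα]
    field_simp
  have key : ∀ n : ℕ, x (4 * (n : ℤ) - 3) = d * r0 ^ n ∧ x (4 * (n : ℤ) - 1) = b * r1 ^ n := by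
    intro n
    induction n with
    | zero => norm_num [hx3, hx1]
    | succ n ih =>
      obtain ⟨h3, h1⟩ := ih
      have hp : r0 ^ n * r1 ^ n = 1 := by rw [← mul_pow, hr, one_pow]
      have e1 : x (4 * (n : ℤ) + 1) = d * r0 ^ (n + 1) := by
        have h := hrec (4 * n) (by positivity)
        rw [h1, h3] at h
        have hden : A + B * (b * r1 ^ n) * (d * r0 ^ n) = A + B * b * d := by
          linear_combination (B * b * d) * hp
        rw [hden] at h
        rw [h, pow_succ, hr0def]
        field_simp
      have e2 : x (4 * (n : ℤ) + 3) = b * r1 ^ (n + 1) := by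
        have h := hrec (4 * n + 2) (by positivity)
        rw [show (4 * (n : ℤ) + 2 + 1) = 4 * n + 3 by ring,
            show (4 * (n : ℤ) + 2 - 1) = 4 * n + 1 by ring,
            show (4 * (n : ℤ) + 2 - 3) = 4 * n - 1 by ring] at h
        rw [e1, h1] at h
        have hden2 : A + B * (d * r0 ^ (n + 1)) * (b * r1 ^ n) = A ^ 2 / (A + B * b * d) := by
          have step1 : A + B * (d * r0 ^ (n + 1)) * (b * r1 ^ n) = A + B * b * d * r0 := by
            rw [pow_succ]; linear_combination (B * b * d * r0) * hp
          rw [step1, hr0def]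
          field_simp
          linear_combination (B * b * d) * hAα
        rw [hden2] at h
        have key2 : ∀ R : ℝ, α * (b * R) / (A ^ 2 / (A + B * b * d)) = b * (R * r1) := by
          intro R; rw [hr1def]; field_simp
        rw [h, pow_succ]
        exact key2 _
      constructor
      · rw [show (4 * ((n : ℕ) + 1 : ℕ) : ℤ) - 3 = 4 * (n : ℤ) + 1 by push_cast; ring]
        exact e1
      · rw [show (4 * ((n : ℕ) + 1 : ℕ) : ℤ) - 1 = 4 * (n : ℤ) + 3 by push_cast; ring]
        exact e2
  have hαA : |α| = |A| := by rw [hAα, abs_neg]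
  have habs0 : |r0| = |A| / |A + B * b * d| := by
    rw [hr0def, abs_div, hαA]
  have habs1 : |r1| = |A + B * b * d| / |A| := by
    rw [hr1def, abs_div, abs_mul, hαA, abs_pow, pow_two,
      mul_div_mul_left _ _ (abs_ne_zero.mpr hA)]
  have hAD : |A + B * b * d| ≠ 0 := abs_ne_zero.mpr hD
  have f1 : (fun n : ℕ => x (4 * (n : ℤ) - 1)) = fun n : ℕ => b * r1 ^ n :=
    funext fun n => (key n).2
  have f3 : (fun n : ℕ => x (4 * (n : ℤ) - 3)) = fun n : ℕ => d * r0 ^ n :=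
    funext fun n => (key n).1
  constructor
  · intro h
    have h1lt : |r1| < 1 := by
      rw [habs1]; exact (div_lt_one (abs_pos.mpr hA)).mpr h
    have h0gt : 1 < |r0| := by
      rw [habs0]
      exact (one_lt_div (lt_of_le_of_ne (abs_nonneg _) (Ne.symm hAD))).mpr h
    constructor
    · rw [f1]
      simpa using (tendsto_pow_atTop_nhds_zero_of_abs_lt_one h1lt).const_mul b
    · have : (fun n : ℕ => |x (4 * (n : ℤ) - 3)|) = fun n : ℕ => |d| * |r0| ^ n := by
        funext n; rw [(key n).1, abs_mul, abs_pow]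
      rw [this]
      exact (tendsto_pow_atTop_atTop_of_one_lt h0gt).const_mul_atTop (abs_pos.mpr hd)
  · intro h
    have h0lt : |r0| < 1 := by
      rw [habs0]
      exact (div_lt_one (lt_of_le_of_ne (abs_nonneg _) (Ne.symm hAD))).mpr h
    have h1gt : 1 < |r1| := by
      rw [habs1]; exact (one_lt_div (abs_pos.mpr hA)).mpr h
    constructor
    · rw [f3]
      simpa using (tendsto_pow_atTop_nhds_zero_of_abs_lt_one h0lt).const_mul d
    · have : (fun n : ℕ => |x (4 * (n : ℤ) - 1)|) = fun n : ℕ => |b| * |r1| ^ n := by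
        funext n; rw [(key n).2, abs_mul, abs_pow]
      rw [this]
      exact (tendsto_pow_atTop_atTop_of_one_lt h1gt).const_mul_atTop (abs_pos.mpr hb)
end

section
/- Assume |A/α| < 1, and let (x_n)_{n≥-3} be a well-defined solution of the difference equation. Then each of the four subsequences (x_{4n-3})_n, (x_{4n-2})_n, (x_{4n-1})_n and (x_{4n})_n converges to a (finite) real limit. -/
open Filter Finset

/-- A sequence whose consecutive differences are geometrically small relative to the
current term converges. -/
lemma conv_of_ratio (u : ℕ → ℝ) (C Q : ℝ) (hC : 0 ≤ C) (hQ0 : 0 ≤ Q) (hQ1 : Q < 1)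
    (h : ∀ n, |u (n + 1) - u n| ≤ C * Q ^ n * |u n|) :
    ∃ l, Tendsto u atTop (nhds l) := by
  have hb : ∀ n, |u n| ≤ |u 0| * Real.exp (C * ∑ k ∈ range n, Q ^ k) := by
    intro n
    induction n with
    | zero => simp
    | succ n ih =>
      have h2 : |u (n + 1)| ≤ |u n| + |u (n + 1) - u n| := by
        calc |u (n + 1)| = |u n + (u (n + 1) - u n)| := by congr 1 <;> ring
          _ ≤ |u n| + |u (n + 1) - u n| := abs_add_le _ _
      have h1 : |u (n + 1)| ≤ (1 + C * Q ^ n) * |u n| := by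
        nlinarith [h n, abs_nonneg (u n)]
      have h3 : (1 + C * Q ^ n) ≤ Real.exp (C * Q ^ n) := by
        have := Real.add_one_le_exp (C * Q ^ n); linarith
      calc |u (n + 1)| ≤ (1 + C * Q ^ n) * |u n| := h1
        _ ≤ Real.exp (C * Q ^ n) * (|u 0| * Real.exp (C * ∑ k ∈ range n, Q ^ k)) := by
            apply mul_le_mul h3 ih (abs_nonneg _) (Real.exp_nonneg _)
        _ = |u 0| * Real.exp (C * ∑ k ∈ range (n + 1), Q ^ k) := by
            rw [Finset.sum_range_succ, mul_add, Real.exp_add]; ring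
  set M : ℝ := |u 0| * Real.exp (C * (1 - Q)⁻¹) with hMdef
  have hM : ∀ n, |u n| ≤ M := by
    intro n
    refine (hb n).trans ?_
    apply mul_le_mul_of_nonneg_left _ (abs_nonneg _)
    apply Real.exp_le_exp.mpr
    apply mul_le_mul_of_nonneg_left _ hC
    have hs := Summable.sum_le_tsum (range n) (fun k _ => pow_nonneg hQ0 k)
      (summable_geometric_of_lt_one hQ0 hQ1)
    rwa [tsum_geometric_of_lt_one hQ0 hQ1] at hs
  have hM0 : 0 ≤ M := le_trans (abs_nonneg _) (hM 0)
  have hdist : ∀ n, dist (u n) (u (n + 1)) ≤ (C * M) * Q ^ n := by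
    intro n
    rw [dist_comm, Real.dist_eq]
    calc |u (n + 1) - u n| ≤ C * Q ^ n * |u n| := h n
      _ ≤ C * Q ^ n * M := by
          apply mul_le_mul_of_nonneg_left (hM n) (by positivity)
      _ = (C * M) * Q ^ n := by ring
  have hcauchy : CauchySeq u := cauchySeq_of_le_geometric Q (C * M) hQ1 hdist
  exact cauchySeq_tendsto_of_complete hcauchy

/-- If `|A/α| < 1`, the four subsequences of a well-defined solution converge. -/
theorem stmt_14 (α A B a b c d : ℝ) (hα : α ≠ 0) (hB : B ≠ 0)
    (hratio : |A / α| < 1)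
    (ha : a ≠ 0) (hb : b ≠ 0) (hc : c ≠ 0) (hd : d ≠ 0)
    (x : ℤ → ℝ)
    (hx3 : x (-3) = d) (hx2 : x (-2) = c) (hx1 : x (-1) = b) (hx0 : x 0 = a)
    (hwd : ∀ n : ℤ, 0 ≤ n → A + B * x (n - 1) * x (n - 3) ≠ 0)
    (hrec : ∀ n : ℤ, 0 ≤ n →
      x (n + 1) = α * x (n - 3) / (A + B * x (n - 1) * x (n - 3))) :
    (∃ l₃ : ℝ, Tendsto (fun n : ℕ => x (4 * (n : ℤ) - 3)) atTop (nhds l₃)) ∧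
    (∃ l₂ : ℝ, Tendsto (fun n : ℕ => x (4 * (n : ℤ) - 2)) atTop (nhds l₂)) ∧
    (∃ l₁ : ℝ, Tendsto (fun n : ℕ => x (4 * (n : ℤ) - 1)) atTop (nhds l₁)) ∧
    (∃ l₀ : ℝ, Tendsto (fun n : ℕ => x (4 * (n : ℤ))) atTop (nhds l₀)) := by
  set q : ℝ := A / α with hqdef
  set p : ℝ := B / α with hpdef
  have hqlt : |q| < 1 := hratio
  have hαA : α - A ≠ 0 := by
    intro h
    have hA : A = α := by linarith
    rw [hqdef, hA, div_self hα] at hqlt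
    norm_num at hqlt
  set L : ℝ := B / (α - A) with hLdef
  have hLfix : q * L + p = L := by
    rw [hqdef, hpdef, hLdef]; field_simp; ring
  have hLB : (α - A) * L = B := by
    rw [hLdef]; field_simp
  -- all terms are nonzero
  have hxnat : ∀ m : ℕ, x ((m : ℤ) - 3) ≠ 0 := by
    intro m
    induction m using Nat.strong_induction_on with
    | _ m ih =>
      by_cases h4 : m < 4
      · interval_cases m
        · rw [show ((0 : ℕ) : ℤ) - 3 = -3 by norm_num, hx3]; exact hd
        · rw [show ((1 : ℕ) : ℤ) - 3 = -2 by norm_num, hx2]; exact hc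
        · rw [show ((2 : ℕ) : ℤ) - 3 = -1 by norm_num, hx1]; exact hb
        · rw [show ((3 : ℕ) : ℤ) - 3 = 0 by norm_num, hx0]; exact ha
      · obtain ⟨k, rfl⟩ : ∃ k, m = k + 4 := ⟨m - 4, by omega⟩
        have e : ((k + 4 : ℕ) : ℤ) - 3 = (k : ℤ) + 1 := by push_cast; ring
        rw [e, hrec k (Int.natCast_nonneg k)]
        exact div_ne_zero (mul_ne_zero hα (ih k (by omega)))
          (hwd k (Int.natCast_nonneg k))
  have hxall : ∀ n : ℤ, -3 ≤ n → x n ≠ 0 := by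
    intro n hn
    obtain ⟨m, hm⟩ : ∃ m : ℕ, n = (m : ℤ) - 3 := ⟨(n + 3).toNat, by omega⟩
    rw [hm]; exact hxnat m
  set z : ℤ → ℝ := fun n => (x n * x (n - 2))⁻¹ with hzdef
  -- the key linear recurrence for z
  have hzstep : ∀ n : ℤ, 0 ≤ n → z (n + 1) = q * z (n - 1) + p := by
    intro n hn
    have hx1' : x (n - 1) ≠ 0 := hxall _ (by omega)
    have hx3' : x (n - 3) ≠ 0 := hxall _ (by omega)
    have hden : A + B * x (n - 1) * x (n - 3) ≠ 0 := hwd n hn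
    simp only [hzdef]
    rw [show n + 1 - 2 = n - 1 by ring, show n - 1 - 2 = n - 3 by ring,
      hrec n hn, hqdef, hpdef]
    field_simp
  have hzform : ∀ s : ℤ, -1 ≤ s → ∀ k : ℕ, z (s + 2 * (k : ℤ)) = L + q ^ k * (z s - L) := by
    intro s hs k
    induction k with
    | zero => simp
    | succ k ih =>
      have h1 : s + 2 * ((k + 1 : ℕ) : ℤ) = (s + 2 * (k : ℤ) + 1) + 1 := by push_cast; ring
      rw [h1, hzstep (s + 2 * (k : ℤ) + 1) (by omega),
        show s + 2 * (k : ℤ) + 1 - 1 = s + 2 * (k : ℤ) by ring, ih]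
      linear_combination hLfix
  -- the four-step ratio formula
  have hratio' : ∀ n : ℤ, -3 ≤ n →
      (A * z (n + 2) + B ≠ 0) ∧
        x (n + 4) = x n * (α * z (n + 2)) / (A * z (n + 2) + B) := by
    intro n hn
    have hx0' : x n ≠ 0 := hxall n hn
    have hx2' : x (n + 2) ≠ 0 := hxall _ (by omega)
    have hden : A + B * x (n + 2) * x n ≠ 0 := by
      have h := hwd (n + 3) (by omega)
      rw [show n + 3 - 1 = n + 2 by ring, show n + 3 - 3 = n by ring] at h
      exact h
    have hzv : z (n + 2) = (x (n + 2) * x n)⁻¹ := by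
      simp only [hzdef]; rw [show n + 2 - 2 = n by ring]
    have hD : A * z (n + 2) + B = (A + B * x (n + 2) * x n) / (x (n + 2) * x n) := by
      rw [hzv]; field_simp
    constructor
    · rw [hD]; exact div_ne_zero hden (mul_ne_zero hx2' hx0')
    · have hr := hrec (n + 3) (by omega)
      rw [show n + 3 + 1 = n + 4 by ring, show n + 3 - 1 = n + 2 by ring,
        show n + 3 - 3 = n by ring] at hr
      rw [hr, hzv,
        show A * (x (n + 2) * x n)⁻¹ + B = (A + B * x (n + 2) * x n) / (x (n + 2) * x n) from by
          field_simp,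
        div_div_eq_mul_div]
      congr 1
      field_simp
  -- the main convergence argument
  have key : ∀ (s r : ℤ) (t : ℕ), -1 ≤ s → -3 ≤ r →
      (∀ n : ℕ, 4 * (n : ℤ) + r + 2 = s + 2 * (2 * (n : ℤ) + (t : ℤ))) →
      ∃ l, Tendsto (fun n : ℕ => x (4 * (n : ℤ) + r)) atTop (nhds l) := by
    intro s r t hs hr hidx
    set δ : ℝ := z s - L with hδdef
    set G : ℝ := B * α / (α - A) with hGdef
    have hG : G ≠ 0 := div_ne_zero (mul_ne_zero hB hα) hαA
    have hALB : A * L + B = G := by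
      rw [hLdef, hGdef]; field_simp; ring
    have zval : ∀ n : ℕ, z (4 * (n : ℤ) + r + 2) = L + q ^ (2 * n + t) * δ := by
      intro n
      rw [hidx n,
        show s + 2 * (2 * (n : ℤ) + (t : ℤ)) = s + 2 * ((2 * n + t : ℕ) : ℤ) by push_cast; ring]
      exact hzform s hs (2 * n + t)
    set Q : ℝ := q ^ 2 with hQdef
    have hQ0 : 0 ≤ Q := sq_nonneg q
    have hQ1 : Q < 1 := by nlinarith [sq_abs q, abs_nonneg q]
    have Dval : ∀ n : ℕ, A * z (4 * (n : ℤ) + r + 2) + B = G + A * δ * q ^ (2 * n + t) := by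
      intro n; rw [zval n]; linear_combination hALB
    have Dlim : Tendsto (fun n : ℕ => A * z (4 * (n : ℤ) + r + 2) + B) atTop (nhds G) := by
      have h1 : Tendsto (fun n : ℕ => Q ^ n) atTop (nhds 0) :=
        tendsto_pow_atTop_nhds_zero_of_lt_one hQ0 hQ1
      have h2 : Tendsto (fun n : ℕ => G + (A * δ * q ^ t) * Q ^ n) atTop
          (nhds (G + (A * δ * q ^ t) * 0)) :=
        tendsto_const_nhds.add (h1.const_mul (A * δ * q ^ t))
      rw [mul_zero, add_zero] at h2
      refine h2.congr fun n => ?_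
      rw [Dval n, hQdef, pow_add, pow_mul]
      ring
    obtain ⟨N, hN⟩ : ∃ N : ℕ, ∀ m : ℕ, N ≤ m →
        |G| / 2 ≤ |A * z (4 * (m : ℤ) + r + 2) + B| := by
      have habs := Dlim.abs
      have h3 := habs.eventually (eventually_ge_nhds (half_lt_self (abs_pos.mpr hG)))
      exact eventually_atTop.mp h3
    have hGpos : 0 < |G| := abs_pos.mpr hG
    set C0 : ℝ := (|(α - A) * δ| * |q| ^ t * Q ^ N) / (|G| / 2) with hC0def
    have hC0 : 0 ≤ C0 := by positivity
    -- the difference bound for the shifted sequence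
    have hbd : ∀ n : ℕ,
        |x (4 * ((n : ℤ) + (N : ℤ)) + r + 4) - x (4 * ((n : ℤ) + (N : ℤ)) + r)| ≤
          C0 * Q ^ n * |x (4 * ((n : ℤ) + (N : ℤ)) + r)| := by
      intro n
      have hj : 4 * ((n : ℤ) + (N : ℤ)) + r = 4 * ((n + N : ℕ) : ℤ) + r := by push_cast; ring
      rw [hj]
      set m : ℕ := n + N with hmdef
      obtain ⟨hDne, hfor⟩ := hratio' (4 * (m : ℤ) + r) (by omega)
      have hnum : α * z (4 * (m : ℤ) + r + 2) - (A * z (4 * (m : ℤ) + r + 2) + B) =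
          (α - A) * q ^ (2 * m + t) * δ := by
        rw [zval m]; linear_combination hLB
      have hdiff : x (4 * (m : ℤ) + r + 4) - x (4 * (m : ℤ) + r) =
          x (4 * (m : ℤ) + r) * ((α - A) * q ^ (2 * m + t) * δ) /
            (A * z (4 * (m : ℤ) + r + 2) + B) := by
        rw [hfor]
        rw [eq_div_iff hDne, sub_mul, div_mul_cancel₀ _ hDne]
        linear_combination x (4 * (m : ℤ) + r) * hnum
      rw [hdiff, abs_div]
      have h5 : |x (4 * (m : ℤ) + r) * ((α - A) * q ^ (2 * m + t) * δ)| =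
          |x (4 * (m : ℤ) + r)| * (|(α - A) * δ| * |q| ^ (2 * m + t)) := by
        rw [abs_mul, abs_mul, abs_mul, abs_pow, abs_mul]
        ring
      have hDge := hN m (by omega)
      calc |x (4 * (m : ℤ) + r) * ((α - A) * q ^ (2 * m + t) * δ)| /
            |A * z (4 * (m : ℤ) + r + 2) + B|
          ≤ (|x (4 * (m : ℤ) + r)| * (|(α - A) * δ| * |q| ^ (2 * m + t))) / (|G| / 2) := by
            rw [h5]
            gcongr
        _ = C0 * Q ^ n * |x (4 * (m : ℤ) + r)| := by
            rw [hC0def, hQdef,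
              show 2 * m + t = 2 * n + 2 * N + t by omega]
            rw [show |q| ^ (2 * n + 2 * N + t) = (q ^ 2) ^ n * (q ^ 2) ^ N * |q| ^ t by
              rw [← sq_abs]; rw [pow_add, pow_add, pow_mul, pow_mul]]
            field_simp
    have hbd' : ∀ n : ℕ,
        |(fun n : ℕ => x (4 * ((n : ℤ) + (N : ℤ)) + r)) (n + 1) -
            (fun n : ℕ => x (4 * ((n : ℤ) + (N : ℤ)) + r)) n| ≤
          C0 * Q ^ n * |(fun n : ℕ => x (4 * ((n : ℤ) + (N : ℤ)) + r)) n| := by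
      intro n
      simp only []
      rw [show 4 * ((((n + 1 : ℕ)) : ℤ) + (N : ℤ)) + r = 4 * ((n : ℤ) + (N : ℤ)) + r + 4 by
        push_cast; ring]
      exact hbd n
    obtain ⟨l, hl⟩ := conv_of_ratio (fun n : ℕ => x (4 * ((n : ℤ) + (N : ℤ)) + r)) C0 Q
      hC0 hQ0 hQ1 hbd'
    refine ⟨l, (tendsto_add_atTop_iff_nat N).mp (hl.congr fun n => ?_)⟩
    congr 1 <;> push_cast <;> ring
  obtain ⟨l3, hl3⟩ := key (-1) (-3) 0 (by norm_num) (by norm_num) (fun n => by push_cast; ring)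
  obtain ⟨l2, hl2⟩ := key 0 (-2) 0 (by norm_num) (by norm_num) (fun n => by push_cast; ring)
  obtain ⟨l1, hl1⟩ := key (-1) (-1) 1 (by norm_num) (by norm_num) (fun n => by push_cast; ring)
  obtain ⟨l0, hl0⟩ := key 0 0 1 (by norm_num) (by norm_num) (fun n => by push_cast; ring)
  exact ⟨⟨l3, hl3.congr fun n => by congr 1 <;> ring⟩,
    ⟨l2, hl2.congr fun n => by congr 1 <;> ring⟩,
    ⟨l1, hl1.congr fun n => by congr 1 <;> ring⟩,
    ⟨l0, hl0.congr fun n => by congr 1 <;> ring⟩⟩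
end

section
/- Assume |A/α| < 1, and let (x_n)_{n≥-3} be a well-defined solution of the difference equation. Let l₃, l₂, l₁, l₀ denote the limits of the subsequences (x_{4n-3})_n, (x_{4n-2})_n, (x_{4n-1})_n and (x_{4n})_n respectively (which exist). Then l₃ ≠ 0, l₂ ≠ 0, l₁ ≠ 0, l₀ ≠ 0, and l₃·l₁ = (α − A)/B and l₂·l₀ = (α − A)/B. -/
open Filter Finset

/-- If `|A/α| < 1`, the limits `l₃, l₂, l₁, l₀` of the four subsequences are nonzero
and satisfy `l₃ l₁ = (α - A)/B` and `l₂ l₀ = (α - A)/B`. -/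
theorem stmt_15 (α A B a b c d : ℝ) (hα : α ≠ 0) (hB : B ≠ 0)
    (hratio : |A / α| < 1)
    (ha : a ≠ 0) (hb : b ≠ 0) (hc : c ≠ 0) (hd : d ≠ 0)
    (x : ℤ → ℝ)
    (hx3 : x (-3) = d) (hx2 : x (-2) = c) (hx1 : x (-1) = b) (hx0 : x 0 = a)
    (hwd : ∀ n : ℤ, 0 ≤ n → A + B * x (n - 1) * x (n - 3) ≠ 0)
    (hrec : ∀ n : ℤ, 0 ≤ n →
      x (n + 1) = α * x (n - 3) / (A + B * x (n - 1) * x (n - 3)))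
    (l₃ l₂ l₁ l₀ : ℝ)
    (hl₃ : Tendsto (fun n : ℕ => x (4 * (n : ℤ) - 3)) atTop (nhds l₃))
    (hl₂ : Tendsto (fun n : ℕ => x (4 * (n : ℤ) - 2)) atTop (nhds l₂))
    (hl₁ : Tendsto (fun n : ℕ => x (4 * (n : ℤ) - 1)) atTop (nhds l₁))
    (hl₀ : Tendsto (fun n : ℕ => x (4 * (n : ℤ))) atTop (nhds l₀)) :
    l₃ ≠ 0 ∧ l₂ ≠ 0 ∧ l₁ ≠ 0 ∧ l₀ ≠ 0 ∧
    l₃ * l₁ = (α - A) / B ∧ l₂ * l₀ = (α - A) / B := by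
  set r := A / α with hrdef
  set s := B / α with hsdef
  have hr : |r| < 1 := hratio
  have hs : s ≠ 0 := div_ne_zero hB hα
  have h1r : 1 - r ≠ 0 := by
    intro h
    have hr1 : r = 1 := by linarith
    rw [hr1] at hr; norm_num at hr
  -- all terms nonzero
  have hnz' : ∀ k : ℕ, x ((k : ℤ) - 3) ≠ 0 := by
    intro k
    induction k using Nat.strong_induction_on with
    | _ k ih =>
      match k, ih with
      | 0, _ => simpa using hx3 ▸ hd
      | 1, _ => show x ((1:ℤ) - 3) ≠ 0; norm_num; rw [show (-2:ℤ) = -2 from rfl, hx2]; exact hc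
      | 2, _ => show x ((2:ℤ) - 3) ≠ 0; norm_num; rw [hx1]; exact hb
      | 3, _ => show x ((3:ℤ) - 3) ≠ 0; norm_num; rw [hx0]; exact ha
      | (k+4), ih =>
        have h0 : (0:ℤ) ≤ (k:ℤ) := Int.ofNat_nonneg k
        have hrec' := hrec k h0
        have hwd' := hwd k h0
        have ihk := ih k (by omega)
        have e : ((k:ℤ)+4) - 3 = (k:ℤ) + 1 := by ring
        have e2 : (((k+4 : ℕ)):ℤ) - 3 = (k:ℤ) + 1 := by push_cast; ring
        rw [e2, hrec']
        exact div_ne_zero (mul_ne_zero hα ihk) hwd'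
  have hnz : ∀ m : ℤ, -3 ≤ m → x m ≠ 0 := by
    intro m hm
    obtain ⟨k, hk⟩ : ∃ k : ℕ, m = (k : ℤ) - 3 := ⟨(m + 3).toNat, by omega⟩
    rw [hk]; exact hnz' k
  -- the key step for the products
  have hstep : ∀ m : ℤ, -3 ≤ m →
      1 / (x (m+2) * x (m+4)) = r * (1 / (x m * x (m+2))) + s := by
    intro m hm
    have h0 : (0:ℤ) ≤ m + 3 := by omega
    have hrec' := hrec (m+3) h0
    have hwd' := hwd (m+3) h0
    have e1 : m + 3 + 1 = m + 4 := by ring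
    have e2 : m + 3 - 1 = m + 2 := by ring
    have e3 : m + 3 - 3 = m := by ring
    rw [e1, e2, e3] at hrec'
    rw [e2, e3] at hwd'
    have hxm := hnz m hm
    have hxm2 := hnz (m+2) (by omega)
    rw [hrec', hrdef, hsdef]
    field_simp
  -- convergence of affine recursions with |r| < 1
  have hconv : ∀ g : ℕ → ℝ, (∀ k, g (k+1) = r * g k + s) →
      Tendsto g atTop (nhds (s / (1-r))) := by
    intro g hg
    have hform : ∀ k, g k = r^k * (g 0 - s/(1-r)) + s/(1-r) := by
      intro k
      induction k with
      | zero => simp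
      | succ k ih =>
        rw [hg k, ih, pow_succ]
        field_simp
        ring
    have h0 : Tendsto (fun k : ℕ => r^k * (g 0 - s/(1-r)) + s/(1-r)) atTop
        (nhds (0 * (g 0 - s/(1-r)) + s/(1-r))) :=
      (((tendsto_pow_atTop_nhds_zero_of_abs_lt_one hr).mul_const _).add_const _)
    simpa using h0.congr (fun k => (hform k).symm)
  have hLne : s / (1-r) ≠ 0 := div_ne_zero hs h1r
  have hLinv : (s / (1-r))⁻¹ = (α - A) / B := by
    rw [inv_div, hrdef, hsdef]
    field_simp
  have h2n : Tendsto (fun n : ℕ => 2 * n) atTop atTop :=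
    Filter.tendsto_atTop_atTop.mpr (fun b => ⟨b, fun a ha => by omega⟩)
  -- the products along each chain converge to (α - A)/B
  have chain : ∀ m0 : ℤ, -3 ≤ m0 →
      Tendsto (fun n : ℕ => x (m0 + 4*(n:ℤ)) * x (m0 + 4*(n:ℤ) + 2)) atTop
        (nhds ((α - A)/B)) := by
    intro m0 hm0
    set g : ℕ → ℝ := fun k => 1 / (x (m0 + 2*(k:ℤ)) * x (m0 + 2*(k:ℤ) + 2)) with hgdef
    have hg : ∀ k, g (k+1) = r * g k + s := by
      intro k
      have hst := hstep (m0 + 2*(k:ℤ)) (by omega)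
      have e1 : m0 + 2*(((k:ℕ)+1 : ℕ):ℤ) = m0 + 2*(k:ℤ) + 2 := by push_cast; ring
      have e2 : m0 + 2*(((k:ℕ)+1 : ℕ):ℤ) + 2 = m0 + 2*(k:ℤ) + 4 := by push_cast; ring
      simp only [hgdef]
      rw [e2, e1]
      exact hst
    have hsub : Tendsto (fun n : ℕ => g (2*n)) atTop (nhds (s/(1-r))) :=
      (hconv g hg).comp h2n
    have hinv : Tendsto (fun n : ℕ => (g (2*n))⁻¹) atTop (nhds ((s/(1-r))⁻¹)) :=
      hsub.inv₀ hLne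
    rw [hLinv] at hinv
    refine hinv.congr (fun n => ?_)
    simp only [hgdef, one_div, inv_inv]
    congr 2 <;> push_cast <;> ring
  -- odd chain : l₃ * l₁
  have hodd : Tendsto (fun n : ℕ => x (4*(n:ℤ) - 3) * x (4*(n:ℤ) - 1)) atTop
      (nhds ((α - A)/B)) := by
    refine (chain (-3) (by norm_num)).congr (fun n => ?_)
    congr 2 <;> ring
  have heven : Tendsto (fun n : ℕ => x (4*(n:ℤ) - 2) * x (4*(n:ℤ))) atTop
      (nhds ((α - A)/B)) := by
    refine (chain (-2) (by norm_num)).congr (fun n => ?_)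
    congr 2 <;> ring
  have hp31 : l₃ * l₁ = (α - A)/B := tendsto_nhds_unique (hl₃.mul hl₁) hodd
  have hp20 : l₂ * l₀ = (α - A)/B := tendsto_nhds_unique (hl₂.mul hl₀) heven
  have hαA : α - A ≠ 0 := by
    intro h
    have : r = 1 := by rw [hrdef]; field_simp; linarith
    rw [this] at hr; norm_num at hr
  have hne : (α - A)/B ≠ 0 := div_ne_zero hαA hB
  have h31 : l₃ * l₁ ≠ 0 := hp31 ▸ hne
  have h20 : l₂ * l₀ ≠ 0 := hp20 ▸ hne
  exact ⟨left_ne_zero_of_mul h31, left_ne_zero_of_mul h20,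
    right_ne_zero_of_mul h31, right_ne_zero_of_mul h20, hp31, hp20⟩
end

section
/- Assume |A/α| > 1, A − α + B·b·d ≠ 0 and A − α + B·a·c ≠ 0, and let (x_n)_{n≥-3} be a well-defined solution of the difference equation. Then this solution is not periodic: there is no positive integer p with x_{n+p} = x_n for all n ≥ −3. (The same conclusion holds when A = α.) -/
open Filter Finset

/-- If `|A/α| > 1` with `A - α + B b d ≠ 0` and `A - α + B a c ≠ 0`, or if `A = α`,
then a well-defined solution is not periodic. -/
theorem stmt_17 (α A B a b c d : ℝ) (hα : α ≠ 0) (hB : B ≠ 0)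
    (hcase : (|A / α| > 1 ∧ A - α + B * b * d ≠ 0 ∧ A - α + B * a * c ≠ 0) ∨ A = α)
    (ha : a ≠ 0) (hb : b ≠ 0) (hc : c ≠ 0) (hd : d ≠ 0)
    (x : ℤ → ℝ)
    (hx3 : x (-3) = d) (hx2 : x (-2) = c) (hx1 : x (-1) = b) (hx0 : x 0 = a)
    (hwd : ∀ n : ℤ, 0 ≤ n → A + B * x (n - 1) * x (n - 3) ≠ 0)
    (hrec : ∀ n : ℤ, 0 ≤ n →
      x (n + 1) = α * x (n - 3) / (A + B * x (n - 1) * x (n - 3))) :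
    ¬ ∃ p : ℕ, 0 < p ∧ ∀ n : ℤ, -3 ≤ n → x (n + p) = x n := by
  rintro ⟨p, hp, hper⟩
  set k := A / α with hk
  -- all terms are nonzero
  have hnzAux : ∀ j : ℕ, x (-3 + (j : ℤ)) ≠ 0 ∧ x (-2 + (j : ℤ)) ≠ 0 ∧
      x (-1 + (j : ℤ)) ≠ 0 ∧ x ((j : ℤ)) ≠ 0 := by
    intro j
    induction j with
    | zero =>
      refine ⟨?_, ?_, ?_, ?_⟩
      · rw [show (-3 : ℤ) + ((0 : ℕ) : ℤ) = -3 by norm_num, hx3]; exact hd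
      · rw [show (-2 : ℤ) + ((0 : ℕ) : ℤ) = -2 by norm_num, hx2]; exact hc
      · rw [show (-1 : ℤ) + ((0 : ℕ) : ℤ) = -1 by norm_num, hx1]; exact hb
      · rw [show (((0 : ℕ) : ℤ)) = 0 by norm_num, hx0]; exact ha
    | succ j ih =>
      obtain ⟨i3, i2, i1, i0⟩ := ih
      push_cast
      refine ⟨?_, ?_, ?_, ?_⟩
      · rw [show (-3 : ℤ) + ((j : ℤ) + 1) = -2 + j by ring]; exact i2
      · rw [show (-2 : ℤ) + ((j : ℤ) + 1) = -1 + j by ring]; exact i1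
      · rw [show (-1 : ℤ) + ((j : ℤ) + 1) = (j : ℤ) by ring]; exact i0
      · have h0 : (0 : ℤ) ≤ (j : ℤ) := by positivity
        have hr := hrec j h0
        rw [show (j : ℤ) - 3 = -3 + j by ring] at hr
        rw [hr]
        exact div_ne_zero (mul_ne_zero hα i3) (hwd j h0)
  have hnz : ∀ m : ℤ, -3 ≤ m → x m ≠ 0 := by
    intro m hm
    obtain ⟨j, hj⟩ : ∃ j : ℕ, m = -3 + j := ⟨(m + 3).toNat, by omega⟩
    rw [hj]; exact (hnzAux j).1
  -- the linear recurrence for reciprocals of products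
  have hstep : ∀ n : ℤ, -1 ≤ n →
      1 / (x (n + 2) * x n) = k * (1 / (x n * x (n - 2))) + B / α := by
    intro n hn
    have h0 : (0 : ℤ) ≤ n + 1 := by omega
    have hr := hrec (n + 1) h0
    have hD := hwd (n + 1) h0
    rw [show n + 1 + 1 = n + 2 by ring, show n + 1 - 3 = n - 2 by ring,
      show n + 1 - 1 = n by ring] at hr
    rw [show n + 1 - 3 = n - 2 by ring, show n + 1 - 1 = n by ring] at hD
    have hx_n := hnz n (by omega)
    have hx_n2 := hnz (n - 2) (by omega)
    rw [hr, hk]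
    field_simp
  -- closed form along the odd subsequence
  have key : ∀ m : ℕ, 1 / (x (2 * (m : ℤ) - 1) * x (2 * (m : ℤ) - 3))
      = k ^ m * (1 / (x (-1) * x (-3))) + (B / α) * ∑ i ∈ Finset.range m, k ^ i := by
    intro m
    induction m with
    | zero => norm_num
    | succ m ih =>
      have h := hstep (2 * (m : ℤ) - 1) (by omega)
      rw [show 2 * (m : ℤ) - 1 - 2 = 2 * (m : ℤ) - 3 by ring] at h
      push_cast
      rw [show 2 * ((m : ℤ) + 1) - 1 = 2 * (m : ℤ) - 1 + 2 by ring,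
        show 2 * ((m : ℤ) + 1) - 3 = 2 * (m : ℤ) - 1 by ring, h, ih, geom_sum_succ]
      ring
  -- periodicity gives equality of the two ends
  have hp' : (0 : ℤ) ≤ p := by positivity
  have hper2 : ∀ n : ℤ, -3 ≤ n → x (n + 2 * p) = x n := by
    intro n hn
    have h1 := hper (n + p) (by omega)
    have h2 := hper n hn
    rw [show n + 2 * (p : ℤ) = n + p + p by ring, h1, h2]
  have hWp1 : x (2 * (p : ℤ) - 1) = x (-1) := by
    have := hper2 (-1) (by omega)
    rw [show 2 * (p : ℤ) - 1 = -1 + 2 * p by ring]; exact this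
  have hWp3 : x (2 * (p : ℤ) - 3) = x (-3) := by
    have := hper2 (-3) (by omega)
    rw [show 2 * (p : ℤ) - 3 = -3 + 2 * p by ring]; exact this
  have heq : (1 : ℝ) / (x (-1) * x (-3))
      = k ^ p * (1 / (x (-1) * x (-3))) + (B / α) * ∑ i ∈ Finset.range p, k ^ i := by
    have hK := key p
    rw [hWp1, hWp3] at hK
    exact hK
  rw [hx1, hx3] at heq
  have hbd0 : b * d ≠ 0 := mul_ne_zero hb hd
  rcases hcase with ⟨habs, hbd, -⟩ | hAα
  · -- case |k| > 1
    have hkne : k ≠ 1 := by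
      intro h; rw [h] at habs; simp at habs
    have hP : k ^ p ≠ 1 := by
      intro h
      have h1 : |k ^ p| = 1 := by rw [h]; simp
      rw [abs_pow] at h1
      have h2 : 1 < |k| ^ p := one_lt_pow₀ habs hp.ne'
      linarith
    have hk1 : k - 1 ≠ 0 := sub_ne_zero.mpr hkne
    rw [geom_sum_eq hkne] at heq
    have heq' : α * (k - 1) = α * k ^ p * (k - 1) + B * (k ^ p - 1) * (b * d) := by
      field_simp at heq
      linarith
    have h3 : (k ^ p - 1) * (α * (k - 1) + B * (b * d)) = 0 := by
      linear_combination -heq'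
    have h4 : α * (k - 1) + B * (b * d) = 0 := by
      rcases mul_eq_zero.mp h3 with h | h
      · exact absurd (by linarith : k ^ p = 1) hP
      · exact h
    apply hbd
    rw [hk] at h4
    field_simp at h4
    linarith
  · -- case A = α
    have hk1 : k = 1 := by rw [hk, hAα, div_self hα]
    rw [hk1] at heq
    simp at heq
    have hpz : (p : ℝ) ≠ 0 := Nat.cast_ne_zero.mpr hp.ne'
    rcases heq with (h | h) | h
    · exact hB h
    · exact hα h
    · exact hp.ne' h
end

section
/- Assume A − α + B·b·d = 0 and A − α + B·a·c = 0. Then the solution (x_n)_{n≥-3} of the difference equation with initial data d, c, b, a is well defined and is periodic with period 4: x_{n+4} = x_n for all n ≥ −3. In particular, if moreover d = b, c = a and b ≠ a, then the solution is the 2-periodic sequence a, b, a, b, … and has prime period 2 (it satisfies x_{n+2} = x_n for all n ≥ −3 but not x_{n+1} = x_n). -/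
open Filter Finset

/-- If `A - α + B b d = 0` and `A - α + B a c = 0`, the solution is well defined and
4-periodic; if moreover `d = b`, `c = a` and `b ≠ a`, it has prime period 2. -/
theorem stmt_18 (α A B a b c d : ℝ) (hα : α ≠ 0) (hB : B ≠ 0)
    (hbd : A - α + B * b * d = 0) (hac : A - α + B * a * c = 0)
    (ha : a ≠ 0) (hb : b ≠ 0) (hc : c ≠ 0) (hd : d ≠ 0)
    (x : ℤ → ℝ)
    (hx3 : x (-3) = d) (hx2 : x (-2) = c) (hx1 : x (-1) = b) (hx0 : x 0 = a)
    (hrec : ∀ n : ℤ, 0 ≤ n →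
      x (n + 1) = α * x (n - 3) / (A + B * x (n - 1) * x (n - 3))) :
    (∀ n : ℤ, 0 ≤ n → A + B * x (n - 1) * x (n - 3) ≠ 0) ∧
    (∀ n : ℤ, -3 ≤ n → x (n + 4) = x n) ∧
    (d = b → c = a → b ≠ a →
      (∀ n : ℤ, -3 ≤ n → x (n + 2) = x n) ∧
      ¬ (∀ n : ℤ, -3 ≤ n → x (n + 1) = x n)) := by
  have hbd' : A + B * b * d = α := by linarith
  have hac' : A + B * a * c = α := by linarith
  have C : ∀ m : ℕ, A + B * x ((m : ℤ) - 1) * x ((m : ℤ) - 3) = α ∧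
      x ((m : ℤ) + 1) = x ((m : ℤ) - 3) := by
    intro m
    induction m using Nat.strong_induction_on with
    | _ m ih =>
      match m with
      | 0 =>
        have den : A + B * x ((0:ℤ) - 1) * x ((0:ℤ) - 3) = α := by
          norm_num [hx1, hx3, hbd']
        refine ⟨by exact_mod_cast den, ?_⟩
        have h := hrec 0 le_rfl
        rw [den] at h
        norm_num at h
        push_cast
        norm_num
        rw [h]
        field_simp
      | 1 =>
        have den : A + B * x ((1:ℤ) - 1) * x ((1:ℤ) - 3) = α := by
          norm_num [hx0, hx2]
          linarith [hac']
        refine ⟨by exact_mod_cast den, ?_⟩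
        have h := hrec 1 (by norm_num)
        rw [den] at h
        norm_num at h
        push_cast
        norm_num
        rw [h]
        field_simp
      | 2 =>
        have h1 : x 1 = x (-3) := by
          have := (ih 0 (by norm_num)).2
          push_cast at this
          convert this using 2 <;> norm_num
        have den : A + B * x ((2:ℤ) - 1) * x ((2:ℤ) - 3) = α := by
          norm_num [h1, hx1, hx3]
          linarith [hbd']
        refine ⟨by exact_mod_cast den, ?_⟩
        have h := hrec 2 (by norm_num)
        rw [den] at h
        norm_num at h
        push_cast
        norm_num
        rw [h]
        field_simp
      | 3 =>
        have h1 : x 2 = x (-2) := by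
          have := (ih 1 (by norm_num)).2
          push_cast at this
          convert this using 2 <;> norm_num
        have den : A + B * x ((3:ℤ) - 1) * x ((3:ℤ) - 3) = α := by
          norm_num [h1, hx0, hx2]
          linarith [hac']
        refine ⟨by exact_mod_cast den, ?_⟩
        have h := hrec 3 (by norm_num)
        rw [den] at h
        norm_num at h
        push_cast
        norm_num
        rw [h]
        field_simp
      | (m + 4) =>
        obtain ⟨d0, p0⟩ := ih m (by omega)
        obtain ⟨d2, p2⟩ := ih (m + 2) (by omega)
        push_cast at d0 p0 d2 p2 ⊢
        have e2 : (m : ℤ) + 2 + 1 = (m : ℤ) + 3 := by ring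
        have e2' : (m : ℤ) + 2 - 3 = (m : ℤ) - 1 := by ring
        rw [e2, e2'] at p2
        have e4 : (m : ℤ) + 4 - 1 = (m : ℤ) + 3 := by ring
        have e4' : (m : ℤ) + 4 - 3 = (m : ℤ) + 1 := by ring
        have den : A + B * x ((m : ℤ) + 4 - 1) * x ((m : ℤ) + 4 - 3) = α := by
          rw [e4, e4', p2, p0, d0]
        refine ⟨den, ?_⟩
        have h := hrec ((m : ℤ) + 4) (by positivity)
        rw [den] at h
        rw [e4'] at h ⊢
        rw [h, p0]
        field_simp
  have per4 : ∀ n : ℤ, -3 ≤ n → x (n + 4) = x n := by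
    intro n hn
    have h := (C (n + 3).toNat).2
    rw [Int.toNat_of_nonneg (by linarith)] at h
    have e1 : n + 3 + 1 = n + 4 := by ring
    have e2 : n + 3 - 3 = n := by ring
    rwa [e1, e2] at h
  refine ⟨?_, per4, ?_⟩
  · intro n hn
    have h := (C n.toNat).1
    rw [Int.toNat_of_nonneg hn] at h
    rw [h]
    exact hα
  · intro hdb hca hne
    constructor
    · have per2 : ∀ m : ℕ, x ((m : ℤ) - 3 + 2) = x ((m : ℤ) - 3) := by
        intro m
        induction m using Nat.strong_induction_on with
        | _ m ih =>
          match m with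
          | 0 => norm_num; rw [hx1, hx3, hdb]
          | 1 => norm_num; rw [hx0, hx2, hca]
          | (m + 2) =>
            have h1 := ih m (by omega)
            push_cast at h1 ⊢
            have e1 : (m : ℤ) - 3 + 2 = (m : ℤ) - 1 := by ring
            rw [e1] at h1
            have h2 : x ((m : ℤ) - 3 + 4) = x ((m : ℤ) - 3) := per4 _ (by omega)
            have e2 : (m : ℤ) - 3 + 4 = (m : ℤ) + 2 - 3 + 2 := by ring
            have e3 : (m : ℤ) + 2 - 3 = (m : ℤ) - 1 := by ring
            rw [e2, e3] at h2
            rw [e3, h2, h1]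
      intro n hn
      have h := per2 (n + 3).toNat
      rw [Int.toNat_of_nonneg (by linarith)] at h
      have e1 : n + 3 - 3 + 2 = n + 2 := by ring
      have e2 : n + 3 - 3 = n := by ring
      rwa [e1, e2] at h
    · intro h
      have := h (-1) (by norm_num)
      norm_num [hx0, hx1] at this
      exact hne (this.symm)
end

section
/- Assume |A/α| < 1. Then the difference equation admits a period-4 solution: there exist nonzero real numbers d', c', b', a' such that the solution (y_n)_{n≥-3} with initial conditions y_{-3} = d', y_{-2} = c', y_{-1} = b', y_0 = a' is well defined and satisfies y_{n+4} = y_n for all n ≥ −3. -/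
open Filter Finset

/-- If `|A/α| < 1`, the difference equation admits a well-defined period-4 solution
with nonzero initial data. -/
theorem stmt_19 (α A B : ℝ) (hα : α ≠ 0) (hB : B ≠ 0)
    (hratio : |A / α| < 1) :
    ∃ d' c' b' a' : ℝ, d' ≠ 0 ∧ c' ≠ 0 ∧ b' ≠ 0 ∧ a' ≠ 0 ∧
      ∃ y : ℤ → ℝ,
        y (-3) = d' ∧ y (-2) = c' ∧ y (-1) = b' ∧ y 0 = a' ∧
        (∀ n : ℤ, 0 ≤ n → A + B * y (n - 1) * y (n - 3) ≠ 0) ∧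
        (∀ n : ℤ, 0 ≤ n →
          y (n + 1) = α * y (n - 3) / (A + B * y (n - 1) * y (n - 3))) ∧
        (∀ n : ℤ, -3 ≤ n → y (n + 4) = y n) := by
  have hAα : A ≠ α := by
    intro h
    subst h
    rw [abs_div, div_lt_one (abs_pos.mpr hα)] at hratio
    exact lt_irrefl _ hratio
  set t : ℝ := (α - A) / B with ht
  have htne : t ≠ 0 := by
    apply div_ne_zero _ hB
    exact sub_ne_zero.mpr (fun h => hAα h.symm)
  have hBt : A + B * t = α := by
    rw [ht]; field_simp <;> ring
  set y : ℤ → ℝ := fun n => if n % 4 = 0 ∨ n % 4 = 3 then t else 1 with hy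
  have hprod : ∀ n : ℤ, y (n - 1) * y (n - 3) = t := by
    intro n
    have h4 : n % 4 = 0 ∨ n % 4 = 1 ∨ n % 4 = 2 ∨ n % 4 = 3 := by omega
    rcases h4 with h | h | h | h <;>
      simp only [hy] <;>
      split_ifs with h1 h2 <;>
      first | (exfalso; omega) | ring
  have hden : ∀ n : ℤ, A + B * y (n - 1) * y (n - 3) = α := by
    intro n
    rw [mul_assoc, hprod, hBt]
  have hcongr : ∀ m k : ℤ, m % 4 = k % 4 → y m = y k := by
    intro m k h
    simp only [hy]
    exact if_congr (by omega) rfl rfl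
  refine ⟨1, 1, t, t, one_ne_zero, one_ne_zero, htne, htne, y, ?_, ?_, ?_, ?_, ?_, ?_, ?_⟩
  · simp only [hy]; norm_num
  · simp only [hy]; norm_num
  · simp only [hy]; norm_num
  · simp only [hy]; norm_num
  · intro n _; rw [hden]; exact hα
  · intro n _
    rw [hden, mul_comm, mul_div_assoc, div_self hα, mul_one]
    exact hcongr _ _ (by omega)
  · intro n _
    exact hcongr _ _ (by omega)
end
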